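/- arXiv:nlin/0306047 — 4 statements merged into one kernel-verified Lean document; each statement's English description precedes it below -/
import Mathlib

section
/- Complete monotonicity and weak continuity of the explicit solution for the constant kernel: Let ν₀ be a finite positive Radon measure on (0,∞) and set φ₀(s) = ∫ (1−e^{−sx}) ν₀(dx). Then for each t ≥ 0 the function s ↦ ∂_s[φ₀(s)/(1+tφ₀(s))] is completely monotone on (0,∞), so there is a family of positive Radon measures ν_t on (0,∞) with ∫ (1−e^{−sx}) ν_t(dx) = φ₀(s)/(1+tφ₀(s)); the map t ↦ ν_t is weakly continuous (⟨f,ν_τ⟩ → ⟨f,ν_t⟩ as τ → t, for every continuous f with compact support in (0,∞)), and the total number of clusters satisfies ν_t((0,∞)) = ν₀((0,∞))/(1 + ν₀((0,∞)) t) for all t ≥ 0. -/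
/-!
Complete monotonicity and weak continuity of the explicit solution for the
constant kernel K = 2 (Menon–Pego, Lemma 2.4).
-/

open MeasureTheory Filter Topology Set Real

noncomputable section

/-- Complete monotonicity of g on (0,∞):
g is infinitely differentiable with (−1)ⁿ g⁽ⁿ⁾ ≥ 0 on (0,∞). -/
def CompletelyMonotoneOn (g : ℝ → ℝ) : Prop :=
  (∀ n : ℕ, DifferentiableOn ℝ (iteratedDeriv n g) (Set.Ioi 0)) ∧
  (∀ n : ℕ, ∀ s : ℝ, 0 < s → 0 ≤ (-1 : ℝ) ^ n * iteratedDeriv n g s)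

namespace MPaux


lemma one_add_pos {t M : ℝ} (ht : 0 ≤ t) (hM : 0 ≤ M) : (0:ℝ) < 1 + t * M := by
  nlinarith

lemma ae_pos {μ : Measure ℝ} (h : μ (Set.Iic 0) = 0) : ∀ᵐ x ∂μ, 0 < x := by
  rw [ae_iff]
  refine measure_mono_null (fun x hx => ?_) h
  simp only [Set.mem_setOf_eq, not_lt] at hx
  exact hx

lemma pow_mul_exp_le {x s : ℝ} (hx : 0 ≤ x) (hs : 0 < s) (n : ℕ) :
    x ^ n * Real.exp (-(s * x)) ≤ n.factorial / s ^ n := by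
  have hex : (0:ℝ) < Real.exp (s * x) := Real.exp_pos _
  have key : (s * x) ^ n / n.factorial ≤ Real.exp (s * x) :=
    Real.pow_div_factorial_le_exp (x := s * x) (by positivity) n
  rw [div_le_iff₀ (by positivity)] at key
  rw [Real.exp_neg, le_div_iff₀ (by positivity)]
  rw [mul_pow] at key
  calc x ^ n * (Real.exp (s * x))⁻¹ * s ^ n
      = (s ^ n * x ^ n) * (Real.exp (s * x))⁻¹ := by ring
    _ ≤ (Real.exp (s * x) * n.factorial) * (Real.exp (s * x))⁻¹ :=
        mul_le_mul_of_nonneg_right key (by positivity)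
    _ = n.factorial := by field_simp

lemma integrable_kernel {μ : Measure ℝ} [IsFiniteMeasure μ] (h : μ (Set.Iic 0) = 0)
    (n : ℕ) {s : ℝ} (hs : 0 < s) :
    Integrable (fun x => x ^ n * Real.exp (-(s * x))) μ := by
  refine (integrable_const ((n.factorial : ℝ) / s ^ n)).mono' ?_ ?_
  · exact Continuous.aestronglyMeasurable (by continuity)
  · filter_upwards [ae_pos h] with x hx
    rw [Real.norm_eq_abs, abs_of_nonneg (by positivity)]
    exact pow_mul_exp_le hx.le hs n

lemma hasDerivAt_G {μ : Measure ℝ} [IsFiniteMeasure μ] (h : μ (Set.Iic 0) = 0)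
    (n : ℕ) {s : ℝ} (hs : 0 < s) :
    HasDerivAt (fun u => ∫ x, x ^ n * Real.exp (-(u * x)) ∂μ)
      (-∫ x, x ^ (n + 1) * Real.exp (-(s * x)) ∂μ) s := by
  have h2 : (0:ℝ) < s / 2 := by linarith
  have main := hasDerivAt_integral_of_dominated_loc_of_deriv_le (μ := μ)
      (F := fun u x => x ^ n * Real.exp (-(u * x)))
      (F' := fun u x => -(x ^ (n + 1) * Real.exp (-(u * x))))
      (x₀ := s) (s := Metric.ball s (s / 2))
      (bound := fun _ => (((n + 1).factorial : ℝ) / (s / 2) ^ (n + 1))) (Metric.ball_mem_nhds s h2)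
      (Filter.Eventually.of_forall fun u =>
        Continuous.aestronglyMeasurable (by continuity))
      (integrable_kernel h n hs)
      (Continuous.aestronglyMeasurable (by continuity))
      ?_ (integrable_const _) ?_
  · simpa [integral_neg] using main.2
  · filter_upwards [ae_pos h] with x hx u hu
    have hu2 : s / 2 < u := by
      rw [Metric.mem_ball, Real.dist_eq, abs_lt] at hu
      linarith [hu.1]
    rw [norm_neg, Real.norm_eq_abs, abs_of_nonneg (by positivity)]
    calc x ^ (n + 1) * Real.exp (-(u * x))
        ≤ x ^ (n + 1) * Real.exp (-(s / 2 * x)) := by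
          refine mul_le_mul_of_nonneg_left (Real.exp_le_exp.mpr ?_) (by positivity)
          nlinarith
      _ ≤ _ := pow_mul_exp_le hx.le h2 (n + 1)
  · refine Filter.Eventually.of_forall fun x u _ => ?_
    have h1 : HasDerivAt (fun u : ℝ => -(u * x)) (-x) u := by simpa using ((hasDerivAt_id u).mul_const x).fun_neg
    have h3 := (h1.exp).const_mul (x ^ n)
    convert h3 using 1
    · rfl
    ring

lemma eqOn_iteratedDeriv {f g : ℝ → ℝ} (h : Set.EqOn f g (Set.Ioi 0)) (n : ℕ) :
    Set.EqOn (iteratedDeriv n f) (iteratedDeriv n g) (Set.Ioi 0) := by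
  induction n with
  | zero => simpa using h
  | succ n ih =>
    intro s hs
    rw [iteratedDeriv_succ, iteratedDeriv_succ]
    exact Filter.EventuallyEq.deriv_eq
      (Filter.eventuallyEq_of_mem (isOpen_Ioi.mem_nhds hs) ih)

lemma iteratedDeriv_G {μ : Measure ℝ} [IsFiniteMeasure μ] (h : μ (Set.Iic 0) = 0)
    (k n : ℕ) :
    Set.EqOn (iteratedDeriv n (fun u => ∫ x, x ^ k * Real.exp (-(u * x)) ∂μ))
      (fun u => (-1 : ℝ) ^ n * ∫ x, x ^ (n + k) * Real.exp (-(u * x)) ∂μ)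
      (Set.Ioi 0) := by
  induction n with
  | zero => intro s _; simp [iteratedDeriv_zero]
  | succ n ih =>
    intro s hs
    rw [iteratedDeriv_succ]
    have e1 : deriv (iteratedDeriv n fun u => ∫ x, x ^ k * Real.exp (-(u * x)) ∂μ) s
        = deriv (fun u => (-1 : ℝ) ^ n * ∫ x, x ^ (n + k) * Real.exp (-(u * x)) ∂μ) s :=
      Filter.EventuallyEq.deriv_eq
        (Filter.eventuallyEq_of_mem (isOpen_Ioi.mem_nhds hs) ih)
    have e2 := ((hasDerivAt_G h (n + k) hs).const_mul ((-1 : ℝ) ^ n)).deriv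
    rw [e1, e2]
    have : n + k + 1 = n + 1 + k := by omega
    rw [this]
    ring

lemma cm_of_measure {μ : Measure ℝ} [IsFiniteMeasure μ] (h : μ (Set.Iic 0) = 0)
    {h₀ : ℝ → ℝ} (A : ℝ)
    (heq : ∀ s ∈ Set.Ioi (0:ℝ), h₀ s = A - ∫ x, Real.exp (-(s * x)) ∂μ) :
    (∀ n : ℕ, DifferentiableOn ℝ (iteratedDeriv n (deriv h₀)) (Set.Ioi 0)) ∧
    (∀ n : ℕ, ∀ s : ℝ, 0 < s → 0 ≤ (-1 : ℝ) ^ n * iteratedDeriv n (deriv h₀) s) := by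
  -- h₀ agrees with A - G₀ on Ioi 0
  have heq' : Set.EqOn h₀ (fun u => A - ∫ x, x ^ 0 * Real.exp (-(u * x)) ∂μ) (Set.Ioi 0) := by
    intro s hs
    simpa using heq s hs
  -- deriv h₀ agrees with G₁ on Ioi 0
  have hd : Set.EqOn (deriv h₀) (fun u => ∫ x, x ^ 1 * Real.exp (-(u * x)) ∂μ)
      (Set.Ioi 0) := by
    intro s hs
    have e1 : deriv h₀ s = deriv (fun u => A - ∫ x, x ^ 0 * Real.exp (-(u * x)) ∂μ) s :=
      Filter.EventuallyEq.deriv_eq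
        (Filter.eventuallyEq_of_mem (isOpen_Ioi.mem_nhds hs) heq')
    have e2 := ((hasDerivAt_const s A).sub (hasDerivAt_G h 0 hs)).deriv
    rw [e1]; exact e2.trans (by simp)
  have hiter : ∀ n : ℕ, Set.EqOn (iteratedDeriv n (deriv h₀))
      (fun u => (-1 : ℝ) ^ n * ∫ x, x ^ (n + 1) * Real.exp (-(u * x)) ∂μ) (Set.Ioi 0) :=
    fun n s hs => (eqOn_iteratedDeriv hd n hs).trans (iteratedDeriv_G h 1 n hs)
  constructor
  · intro n s hs
    have hda : DifferentiableAt ℝ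
        (fun u => (-1 : ℝ) ^ n * ∫ x, x ^ (n + 1) * Real.exp (-(u * x)) ∂μ) s :=
      ((hasDerivAt_G h (n + 1) hs).const_mul ((-1 : ℝ) ^ n)).differentiableAt
    have := (Filter.EventuallyEq.differentiableAt_iff
      (Filter.eventuallyEq_of_mem (isOpen_Ioi.mem_nhds hs) (hiter n))).mpr hda
    exact this.differentiableWithinAt
  · intro n s hs
    rw [hiter n hs]
    rw [← mul_assoc, ← mul_pow]
    simp only [neg_mul_neg, one_mul, mul_one, one_pow]
    refine integral_nonneg_of_ae ?_
    filter_upwards [ae_pos h] with x hx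
    positivity
lemma conv_def (μ ν : Measure ℝ) : Measure.conv μ ν
    = Measure.map (fun p : ℝ × ℝ => p.1 + p.2) (μ.prod ν) := rfl

lemma conv_null {μ ν : Measure ℝ} [SFinite μ] [SFinite ν]
    (hμ : μ (Set.Iic 0) = 0) (hν : ν (Set.Iic 0) = 0) :
    (Measure.conv μ ν) (Set.Iic 0) = 0 := by
  rw [conv_def, Measure.map_apply (by fun_prop) measurableSet_Iic]
  refine measure_mono_null
    (t := (Set.Iic 0 ×ˢ Set.univ) ∪ (Set.univ ×ˢ Set.Iic 0)) (fun p hp => ?_) ?_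
  · simp only [Set.mem_preimage, Set.mem_Iic] at hp
    rcases le_or_gt p.1 0 with h1 | h1
    · exact Or.inl (Set.mem_prod.mpr ⟨Set.mem_Iic.mpr h1, Set.mem_univ _⟩)
    · exact Or.inr (Set.mem_prod.mpr ⟨Set.mem_univ _, Set.mem_Iic.mpr (by linarith)⟩)
  · refine measure_union_null ?_ ?_ <;> rw [Measure.prod_prod] <;> simp [hμ, hν]

lemma conv_univ {μ ν : Measure ℝ} [SFinite μ] [SFinite ν] :
    (Measure.conv μ ν) Set.univ = μ Set.univ * ν Set.univ := by
  rw [conv_def, Measure.map_apply (by fun_prop) MeasurableSet.univ]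
  rw [Set.preimage_univ, ← Set.univ_prod_univ, Measure.prod_prod]

lemma lap_conv {μ ν : Measure ℝ} [IsFiniteMeasure μ] [IsFiniteMeasure ν] (s : ℝ) :
    ∫ x, Real.exp (-(s * x)) ∂(Measure.conv μ ν)
      = (∫ x, Real.exp (-(s * x)) ∂μ) * ∫ x, Real.exp (-(s * x)) ∂ν := by
  rw [conv_def, integral_map (by fun_prop)
    (Continuous.aestronglyMeasurable (by continuity))]
  have : ∀ p : ℝ × ℝ, Real.exp (-(s * (p.1 + p.2)))
      = Real.exp (-(s * p.1)) * Real.exp (-(s * p.2)) := by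
    intro p
    rw [← Real.exp_add]
    ring_nf
  simp_rw [this]
  exact integral_prod_mul (fun x => Real.exp (-(s * x))) (fun x => Real.exp (-(s * x)))

/-- Convolution powers: `mpow μ n = μ^{*(n+1)}`. -/
def mpow (μ : Measure ℝ) : ℕ → Measure ℝ
  | 0 => μ
  | n + 1 => Measure.conv (mpow μ n) μ

instance mpow_finite (μ : Measure ℝ) [IsFiniteMeasure μ] :
    ∀ n, IsFiniteMeasure (mpow μ n)
  | 0 => by rw [mpow]; infer_instance
  | n + 1 => by
    haveI := mpow_finite μ n
    rw [mpow]
    infer_instance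

lemma mpow_null {μ : Measure ℝ} [IsFiniteMeasure μ] (h : μ (Set.Iic 0) = 0) :
    ∀ n, mpow μ n (Set.Iic 0) = 0
  | 0 => h
  | n + 1 => by
    haveI := mpow_finite μ n
    rw [mpow]
    exact conv_null (mpow_null h n) h

lemma mpow_univ (μ : Measure ℝ) [IsFiniteMeasure μ] :
    ∀ n, mpow μ n Set.univ = (μ Set.univ) ^ (n + 1)
  | 0 => by rw [mpow]; ring
  | n + 1 => by
    haveI := mpow_finite μ n
    rw [mpow, conv_univ, mpow_univ μ n]
    ring

lemma lap_mpow (μ : Measure ℝ) [IsFiniteMeasure μ] (s : ℝ) :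
    ∀ n, ∫ x, Real.exp (-(s * x)) ∂(mpow μ n)
      = (∫ x, Real.exp (-(s * x)) ∂μ) ^ (n + 1)
  | 0 => by rw [mpow]; ring
  | n + 1 => by
    haveI := mpow_finite μ n
    rw [mpow, lap_conv, lap_mpow μ s n]
    ring
lemma hasSum_c {M L t : ℝ} (hM : 0 ≤ M) (ht : 0 ≤ t) (hL0 : 0 ≤ L) (hLM : L ≤ M) :
    HasSum (fun n : ℕ => t ^ n / (1 + t * M) ^ (n + 2) * L ^ (n + 1))
      (L / ((1 + t * M) * (1 + t * M - t * L))) := by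
  have hP : (0:ℝ) < 1 + t * M := one_add_pos ht hM
  have hQ : (0:ℝ) < 1 + t * M - t * L := by nlinarith
  have hr0 : 0 ≤ t * L / (1 + t * M) := by positivity
  have hr1 : t * L / (1 + t * M) < 1 := by
    rw [div_lt_one hP]
    nlinarith
  have h := (hasSum_geometric_of_lt_one hr0 hr1).mul_left (L / (1 + t * M) ^ 2)
  have h2 : (fun n : ℕ => L / (1 + t * M) ^ 2 * (t * L / (1 + t * M)) ^ n)
      = fun n : ℕ => t ^ n / (1 + t * M) ^ (n + 2) * L ^ (n + 1) := by
    funext n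
    rw [div_pow, mul_pow]
    field_simp
    ring
  rw [h2] at h
  convert h using 1
  · rfl
  have h3 : 1 - t * L / (1 + t * M) = (1 + t * M - t * L) / (1 + t * M) := by
    field_simp
  rw [h3, inv_div, div_mul_div_comm]
  rw [div_eq_div_iff (by positivity) (by positivity)]
  ring
/-- coefficient of the series defining the solution measure -/
def cc (μ : Measure ℝ) (t : ℝ) (n : ℕ) : ℝ :=
  t ^ n / (1 + t * (μ Set.univ).toReal) ^ (n + 2)

/-- the solution measure at time `t` -/
def nut (μ : Measure ℝ) (t : ℝ) : Measure ℝ :=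
  Measure.sum fun n => ENNReal.ofReal (cc μ t n) • mpow μ n

section Nut

variable {μ : Measure ℝ} [IsFiniteMeasure μ] {t : ℝ}

lemma cc_nonneg (ht : 0 ≤ t) (n : ℕ) : 0 ≤ cc μ t n :=
  div_nonneg (pow_nonneg ht n)
    (pow_nonneg (one_add_pos ht ENNReal.toReal_nonneg).le _)

lemma nut_apply {E : Set ℝ} (hE : MeasurableSet E) :
    nut μ t E = ∑' n, ENNReal.ofReal (cc μ t n) * mpow μ n E := by
  rw [nut, Measure.sum_apply _ hE]
  simp [Measure.smul_apply, smul_eq_mul]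

lemma nut_iic (h : μ (Set.Iic 0) = 0) : nut μ t (Set.Iic 0) = 0 := by
  rw [nut_apply measurableSet_Iic]
  simp [mpow_null h]

lemma nut_univ (ht : 0 ≤ t) :
    nut μ t Set.univ = ENNReal.ofReal ((μ Set.univ).toReal
      / (1 + t * (μ Set.univ).toReal)) := by
  set M : ℝ := (μ Set.univ).toReal with hM
  have hM0 : 0 ≤ M := ENNReal.toReal_nonneg
  have hμuniv : μ Set.univ = ENNReal.ofReal M := by
    rw [hM, ENNReal.ofReal_toReal (measure_ne_top _ _)]
  rw [nut_apply MeasurableSet.univ]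
  have e1 : ∀ n : ℕ, ENNReal.ofReal (cc μ t n) * mpow μ n Set.univ
      = ENNReal.ofReal (cc μ t n * M ^ (n + 1)) := by
    intro n
    rw [mpow_univ, hμuniv, ← ENNReal.ofReal_pow hM0,
      ← ENNReal.ofReal_mul (cc_nonneg ht n)]
  simp_rw [e1]
  have hs := hasSum_c hM0 ht hM0 le_rfl
  have hcceq : ∀ n : ℕ, cc μ t n * M ^ (n + 1)
      = t ^ n / (1 + t * M) ^ (n + 2) * M ^ (n + 1) := fun n => rfl
  simp_rw [hcceq]
  rw [← ENNReal.ofReal_tsum_of_nonneg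
    (fun n => mul_nonneg (div_nonneg (pow_nonneg ht n)
      (pow_nonneg (one_add_pos ht hM0).le _)) (pow_nonneg hM0 _)) hs.summable]
  rw [hs.tsum_eq]
  congr 1
  rw [div_eq_div_iff (by have := one_add_pos ht hM0; nlinarith)
    (one_add_pos ht hM0).ne']
  ring

lemma nut_finite (ht : 0 ≤ t) : IsFiniteMeasure (nut μ t) :=
  ⟨by rw [nut_univ ht]; exact ENNReal.ofReal_lt_top⟩

lemma nut_integral (ht : 0 ≤ t) {g : ℝ → ℝ} {C : ℝ} (hg : Continuous g)
    (hgb : ∀ᵐ x ∂(nut μ t), ‖g x‖ ≤ C) :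
    ∫ x, g x ∂(nut μ t) = ∑' n, cc μ t n * ∫ x, g x ∂(mpow μ n) := by
  haveI := nut_finite (μ := μ) ht
  have hgint : Integrable g (nut μ t) :=
    (integrable_const C).mono' hg.aestronglyMeasurable hgb
  rw [nut] at hgint ⊢
  rw [integral_sum_measure hgint]
  congr 1
  funext n
  rw [integral_smul_measure, ENNReal.toReal_ofReal (cc_nonneg ht n), smul_eq_mul]

lemma lap_nonneg (s : ℝ) : 0 ≤ ∫ x, Real.exp (-(s * x)) ∂μ :=
  integral_nonneg fun x => (Real.exp_pos _).le

lemma lap_le_mass (h : μ (Set.Iic 0) = 0) {s : ℝ} (hs : 0 < s) :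
    ∫ x, Real.exp (-(s * x)) ∂μ ≤ (μ Set.univ).toReal := by
  have h1 : ∀ᵐ x ∂μ, Real.exp (-(s * x)) ≤ 1 := by
    filter_upwards [ae_pos h] with x hx
    rw [Real.exp_le_one_iff]
    nlinarith
  calc ∫ x, Real.exp (-(s * x)) ∂μ ≤ ∫ _x, (1:ℝ) ∂μ :=
        integral_mono_ae (by simpa using integrable_kernel h 0 hs)
          (integrable_const 1) h1
    _ = (μ Set.univ).toReal := by simp [Measure.real]

lemma lap_nut (h : μ (Set.Iic 0) = 0) (ht : 0 ≤ t) {s : ℝ} (hs : 0 < s) :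
    ∫ x, Real.exp (-(s * x)) ∂(nut μ t)
      = (∫ x, Real.exp (-(s * x)) ∂μ)
        / ((1 + t * (μ Set.univ).toReal)
          * (1 + t * (μ Set.univ).toReal - t * ∫ x, Real.exp (-(s * x)) ∂μ)) := by
  set M : ℝ := (μ Set.univ).toReal with hM
  have hM0 : 0 ≤ M := ENNReal.toReal_nonneg
  have hb : ∀ᵐ x ∂(nut μ t), ‖Real.exp (-(s * x))‖ ≤ 1 := by
    filter_upwards [ae_pos (nut_iic h)] with x hx
    rw [Real.norm_eq_abs, abs_of_pos (Real.exp_pos _), Real.exp_le_one_iff]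
    nlinarith
  rw [nut_integral ht (by continuity) hb]
  have e1 : ∀ n, ∫ x, Real.exp (-(s * x)) ∂(mpow μ n)
      = (∫ x, Real.exp (-(s * x)) ∂μ) ^ (n + 1) := fun n => lap_mpow μ s n
  simp_rw [e1]
  exact (hasSum_c hM0 ht (lap_nonneg s) (lap_le_mass h hs)).tsum_eq

lemma integrable_one_sub_exp {ν : Measure ℝ} [IsFiniteMeasure ν]
    (h : ν (Set.Iic 0) = 0) {s : ℝ} (hs : 0 < s) :
    Integrable (fun x => 1 - Real.exp (-(s * x))) ν :=
  (integrable_const 1).sub (by simpa using integrable_kernel h 0 hs)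

lemma onesub_nut (h : μ (Set.Iic 0) = 0) (ht : 0 ≤ t) {s : ℝ} (hs : 0 < s) :
    ∫ x, (1 - Real.exp (-(s * x))) ∂(nut μ t)
      = ((μ Set.univ).toReal - ∫ x, Real.exp (-(s * x)) ∂μ)
        / (1 + t * ((μ Set.univ).toReal - ∫ x, Real.exp (-(s * x)) ∂μ)) := by
  haveI := nut_finite (μ := μ) ht
  set M : ℝ := (μ Set.univ).toReal with hM
  set L : ℝ := ∫ x, Real.exp (-(s * x)) ∂μ with hL
  have hM0 : 0 ≤ M := ENNReal.toReal_nonneg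
  have hL0 : 0 ≤ L := lap_nonneg s
  have hLM : L ≤ M := lap_le_mass h hs
  have hP : (0:ℝ) < 1 + t * M := one_add_pos ht hM0
  have hQ : (0:ℝ) < 1 + t * M - t * L := by
    have := mul_le_mul_of_nonneg_left hLM ht
    linarith
  rw [integral_sub (integrable_const 1)
    (by simpa using integrable_kernel (nut_iic h) 0 hs)]
  rw [lap_nut h ht hs, ← hL, ← hM]
  have e2 : ∫ _x, (1:ℝ) ∂(nut μ t) = M / (1 + t * M) := by
    rw [integral_const, smul_eq_mul, mul_one, measureReal_def, nut_univ ht, ← hM,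
      ENNReal.toReal_ofReal (div_nonneg hM0 hP.le)]
  rw [e2]
  have hR : 1 + t * (M - L) = 1 + t * M - t * L := by ring
  rw [hR]
  rw [div_sub_div _ _ hP.ne' (by positivity), div_eq_div_iff (by positivity) hQ.ne']
  ring

end Nut
lemma cc_def (μ : Measure ℝ) (t : ℝ) (n : ℕ) :
    cc μ t n = t ^ n / (1 + t * (μ Set.univ).toReal) ^ (n + 2) := rfl

end MPaux

theorem const_kernel_explicit_solution
    (ν₀ : Measure ℝ) [IsFiniteMeasure ν₀] (hν₀supp : ν₀ (Set.Iic 0) = 0)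
    (φ₀ : ℝ → ℝ) (hφ₀ : ∀ s : ℝ, φ₀ s = ∫ x, (1 - Real.exp (-(s * x))) ∂ν₀) :
    -- for each t ≥ 0, s ↦ ∂_s [φ₀(s)/(1 + t φ₀(s))] is completely monotone on (0,∞)
    (∀ t : ℝ, 0 ≤ t →
      CompletelyMonotoneOn (deriv (fun s => φ₀ s / (1 + t * φ₀ s)))) ∧
    -- hence there is a family of positive measures ν_t realizing this transform,
    ∃ ν : ℝ → Measure ℝ,
      (∀ t : ℝ, 0 ≤ t → (ν t) (Set.Iic 0) = 0 ∧
        ∀ s : ℝ, 0 < s →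
          ∫ x, (1 - Real.exp (-(s * x))) ∂(ν t) = φ₀ s / (1 + t * φ₀ s)) ∧
      -- weakly continuous in t on [0,∞):
      (∀ f : ℝ → ℝ, Continuous f → HasCompactSupport f → tsupport f ⊆ Set.Ioi 0 →
        ∀ t : ℝ, 0 ≤ t →
          Tendsto (fun τ => ∫ x, f x ∂(ν τ)) (𝓝[Set.Ici 0] t)
            (𝓝 (∫ x, f x ∂(ν t)))) ∧
      -- with decreasing total number of clusters ν_t((0,∞)) = m₀(0)/(1 + m₀(0) t)
      (∀ t : ℝ, 0 ≤ t →
        ((ν t) (Set.Ioi 0)).toReal =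
          (ν₀ (Set.Ioi 0)).toReal / (1 + (ν₀ (Set.Ioi 0)).toReal * t)) := by
  have hM0 : (0:ℝ) ≤ (ν₀ Set.univ).toReal := ENNReal.toReal_nonneg
  have hφeq : ∀ s : ℝ, 0 < s →
      φ₀ s = (ν₀ Set.univ).toReal - ∫ x, Real.exp (-(s * x)) ∂ν₀ := by
    intro s hs
    rw [hφ₀ s, integral_sub (integrable_const 1)
      (by simpa using MPaux.integrable_kernel hν₀supp 0 hs)]
    rw [integral_const, smul_eq_mul, mul_one, measureReal_def]
  have hval : ∀ {t : ℝ}, 0 ≤ t → ∀ {s : ℝ}, 0 < s →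
      ∫ x, (1 - Real.exp (-(s * x))) ∂(MPaux.nut ν₀ t) = φ₀ s / (1 + t * φ₀ s) := by
    intro t ht s hs
    rw [MPaux.onesub_nut hν₀supp ht hs, hφeq s hs]
  constructor
  · -- complete monotonicity
    intro t ht
    haveI := MPaux.nut_finite (μ := ν₀) ht
    have heq : ∀ s ∈ Set.Ioi (0:ℝ), φ₀ s / (1 + t * φ₀ s)
        = (ν₀ Set.univ).toReal / (1 + t * (ν₀ Set.univ).toReal)
          - ∫ x, Real.exp (-(s * x)) ∂(MPaux.nut ν₀ t) := by
      intro s hs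
      have hs' : 0 < s := hs
      rw [← hval ht hs']
      rw [integral_sub (integrable_const 1)
        (by simpa using MPaux.integrable_kernel (MPaux.nut_iic hν₀supp) 0 hs')]
      congr 1
      rw [integral_const, smul_eq_mul, mul_one, measureReal_def, MPaux.nut_univ ht,
        ENNReal.toReal_ofReal (div_nonneg hM0 (MPaux.one_add_pos ht hM0).le)]
    exact MPaux.cm_of_measure (MPaux.nut_iic hν₀supp)
      ((ν₀ Set.univ).toReal / (1 + t * (ν₀ Set.univ).toReal)) heq
  refine ⟨MPaux.nut ν₀,
    fun t ht => ⟨MPaux.nut_iic hν₀supp, fun s hs => hval ht hs⟩, ?_, ?_⟩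
  · -- weak continuity
    intro f hf hfc _hfs t ht
    obtain ⟨C, hC⟩ := hf.bounded_above_of_compact_support hfc
    have hC0 : 0 ≤ C := le_trans (norm_nonneg (f 0)) (hC 0)
    have hIb : ∀ n : ℕ, ‖∫ x, f x ∂(MPaux.mpow ν₀ n)‖
        ≤ C * (ν₀ Set.univ).toReal ^ (n + 1) := by
      intro n
      calc ‖∫ x, f x ∂(MPaux.mpow ν₀ n)‖ ≤ ∫ x, ‖f x‖ ∂(MPaux.mpow ν₀ n) :=
            norm_integral_le_integral_norm _
        _ ≤ ∫ _x, C ∂(MPaux.mpow ν₀ n) :=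
            integral_mono_ae
              ((integrable_const C).mono' hf.norm.aestronglyMeasurable
                (Filter.Eventually.of_forall fun x => by simpa using hC x))
              (integrable_const C) (Filter.Eventually.of_forall hC)
        _ = C * (ν₀ Set.univ).toReal ^ (n + 1) := by
            rw [integral_const, smul_eq_mul, measureReal_def, MPaux.mpow_univ, ENNReal.toReal_pow]
            ring
    have hexp : ∀ {τ : ℝ}, 0 ≤ τ → ∫ x, f x ∂(MPaux.nut ν₀ τ)
        = ∑' n, MPaux.cc ν₀ τ n * ∫ x, f x ∂(MPaux.mpow ν₀ n) :=
      fun {τ} hτ => MPaux.nut_integral hτ hf (Filter.Eventually.of_forall hC)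
    rw [hexp ht]
    have ht1 : (0:ℝ) ≤ t + 1 := by linarith
    have hPt1 : (0:ℝ) < 1 + (t + 1) * (ν₀ Set.univ).toReal :=
      MPaux.one_add_pos ht1 hM0
    set r : ℝ := (t + 1) * (ν₀ Set.univ).toReal
      / (1 + (t + 1) * (ν₀ Set.univ).toReal) with hrdef
    have hr0 : 0 ≤ r := div_nonneg (mul_nonneg ht1 hM0) hPt1.le
    have hr1 : r < 1 := by rw [hrdef, div_lt_one hPt1]; linarith
    have key := tendsto_tsum_of_dominated_convergence
      (𝓕 := 𝓝[Set.Ici 0] t)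
      (f := fun τ n => MPaux.cc ν₀ τ n * ∫ x, f x ∂(MPaux.mpow ν₀ n))
      (g := fun n => MPaux.cc ν₀ t n * ∫ x, f x ∂(MPaux.mpow ν₀ n))
      (bound := fun n => C * (ν₀ Set.univ).toReal * r ^ n)
      ((summable_geometric_of_lt_one hr0 hr1).mul_left _) ?_ ?_
    · refine Filter.Tendsto.congr' ?_ key
      filter_upwards [self_mem_nhdsWithin] with τ hτ
      exact (hexp hτ).symm
    · intro n
      have hcont : ContinuousWithinAt
          (fun τ : ℝ => MPaux.cc ν₀ τ n * ∫ x, f x ∂(MPaux.mpow ν₀ n))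
          (Set.Ici 0) t := by
        apply ContinuousWithinAt.mul _ continuousWithinAt_const
        apply ContinuousAt.continuousWithinAt
        simp only [MPaux.cc_def]
        exact ContinuousAt.div (by fun_prop) (by fun_prop)
          (pow_ne_zero _ (MPaux.one_add_pos ht hM0).ne')
      exact hcont
    · filter_upwards [self_mem_nhdsWithin,
        mem_nhdsWithin_of_mem_nhds (Iio_mem_nhds (lt_add_one t))] with τ hτ0 hτ1 n
      have hτ0' : (0:ℝ) ≤ τ := hτ0
      have hτle : τ ≤ t + 1 := le_of_lt hτ1
      have hPτ : (0:ℝ) < 1 + τ * (ν₀ Set.univ).toReal := MPaux.one_add_pos hτ0' hM0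
      have hρ0 : 0 ≤ τ * (ν₀ Set.univ).toReal / (1 + τ * (ν₀ Set.univ).toReal) :=
        div_nonneg (mul_nonneg hτ0' hM0) hPτ.le
      have hρr : τ * (ν₀ Set.univ).toReal / (1 + τ * (ν₀ Set.univ).toReal) ≤ r := by
        rw [hrdef, div_le_div_iff₀ hPτ hPt1]
        nlinarith [mul_le_mul_of_nonneg_right hτle hM0]
      have key2 : MPaux.cc ν₀ τ n * (ν₀ Set.univ).toReal ^ (n + 1)
          ≤ (ν₀ Set.univ).toReal * r ^ n := by
        have e : MPaux.cc ν₀ τ n * (ν₀ Set.univ).toReal ^ (n + 1)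
            = (ν₀ Set.univ).toReal
              * (τ * (ν₀ Set.univ).toReal / (1 + τ * (ν₀ Set.univ).toReal)) ^ n
              / (1 + τ * (ν₀ Set.univ).toReal) ^ 2 := by
          rw [MPaux.cc_def, div_pow]
          field_simp
          ring
        rw [e]
        calc (ν₀ Set.univ).toReal
              * (τ * (ν₀ Set.univ).toReal / (1 + τ * (ν₀ Set.univ).toReal)) ^ n
              / (1 + τ * (ν₀ Set.univ).toReal) ^ 2
            ≤ (ν₀ Set.univ).toReal
              * (τ * (ν₀ Set.univ).toReal / (1 + τ * (ν₀ Set.univ).toReal)) ^ n := by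
              apply div_le_self (mul_nonneg hM0 (pow_nonneg hρ0 n))
              nlinarith [mul_nonneg hτ0' hM0]
          _ ≤ (ν₀ Set.univ).toReal * r ^ n :=
              mul_le_mul_of_nonneg_left (pow_le_pow_left₀ hρ0 hρr n) hM0
      calc ‖MPaux.cc ν₀ τ n * ∫ x, f x ∂(MPaux.mpow ν₀ n)‖
          = MPaux.cc ν₀ τ n * ‖∫ x, f x ∂(MPaux.mpow ν₀ n)‖ := by
            rw [norm_mul, Real.norm_eq_abs (MPaux.cc ν₀ τ n),
              abs_of_nonneg (MPaux.cc_nonneg hτ0' n)]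
        _ ≤ MPaux.cc ν₀ τ n * (C * (ν₀ Set.univ).toReal ^ (n + 1)) :=
            mul_le_mul_of_nonneg_left (hIb n) (MPaux.cc_nonneg hτ0' n)
        _ = C * (MPaux.cc ν₀ τ n * (ν₀ Set.univ).toReal ^ (n + 1)) := by ring
        _ ≤ C * ((ν₀ Set.univ).toReal * r ^ n) :=
            mul_le_mul_of_nonneg_left key2 hC0
        _ = C * (ν₀ Set.univ).toReal * r ^ n := by ring
  · -- total mass
    intro t ht
    have hcompl : ∀ (μ : Measure ℝ), μ (Set.Iic 0) = 0 →
        μ (Set.Ioi 0) = μ Set.univ := by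
      intro μ hμ
      rw [← Set.compl_Iic,
        measure_compl measurableSet_Iic (by rw [hμ]; exact ENNReal.zero_ne_top),
        hμ, tsub_zero]
    rw [hcompl _ (MPaux.nut_iic hν₀supp), hcompl _ hν₀supp, MPaux.nut_univ ht,
      ENNReal.toReal_ofReal (div_nonneg hM0 (MPaux.one_add_pos ht hM0).le),
      mul_comm (ν₀ Set.univ).toReal t]
end
end

section
/- The coagulation functional need not be a measure for the additive kernel: Let ν be the positive measure on (0,∞) given by ν(dx) = x^{−3/2} 1_{(0,1)}(x) dx + δ₂(dx), where δ₂ is the Dirac mass at 2. Then ν has finite total mass ∫ x ν(dx) < ∞, yet there exists a continuous function f with compact support contained in [2,5] ⊂ (0,∞) such that the function (x,y) ↦ [f(x+y) − f(x) − f(y)](x+y) is not absolutely integrable with respect to the product measure ν ⊗ ν; in particular, for every small δ > 0, ∫₀^δ ∫₀^∞ [f(x+y)−f(x)−f(y)](x+y) ν(dx)ν(dy) = ∫₀^δ f(2+y)(2+y) y^{−3/2} dy, which diverges when f rises sufficiently steeply to the right of 2. Hence L(ν), defined by ⟨f, L(ν)⟩ = ½ ∫∫ [f(x+y)−f(x)−f(y)](x+y)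 ν(dx)ν(dy) on test functions, is not a Radon measure. -/
/-!
The coagulation functional L(ν) need not be a measure for the additive kernel:
counterexample with ν(dx) = x^{−3/2} 1_{(0,1)}(x) dx + δ₂(dx)
(Menon–Pego, Section 2.2 and Figure 1).
-/

open MeasureTheory Filter Topology Set Real

noncomputable section

/-- The counterexample measure ν(dx) = x^{−3/2} 1_{(0,1)}(x) dx + δ₂(dx). -/
def counterexampleMeasure : Measure ℝ :=
  (volume.restrict (Set.Ioo (0:ℝ) 1)).withDensity
    (fun x => ENNReal.ofReal (x ^ (-(3:ℝ)/2))) + Measure.dirac 2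

namespace CEaux

def f : ℝ → ℝ := fun x => Real.sqrt (min (x - 2) (5 - x))

lemma f_cont : Continuous f := by
  unfold f; fun_prop

lemma f_nonneg (x : ℝ) : 0 ≤ f x := Real.sqrt_nonneg _

lemma f_supp (x : ℝ) (hx : x ∉ Set.Icc (2:ℝ) 5) : f x = 0 := by
  simp only [Set.mem_Icc, not_and_or, not_le] at hx
  unfold f
  rcases hx with h | h
  · exact Real.sqrt_eq_zero'.mpr (by rw [min_le_iff]; left; linarith)
  · exact Real.sqrt_eq_zero'.mpr (by rw [min_le_iff]; right; linarith)

lemma f_lt_two (x : ℝ) (hx : x < 2) : f x = 0 :=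
  f_supp x (by simp [Set.mem_Icc]; intro h; linarith)

lemma f_two : f 2 = 0 := by
  unfold f; norm_num

lemma f_eval {y : ℝ} (h0 : 0 < y) (h1 : y < 1) : f (2 + y) = Real.sqrt y := by
  unfold f
  congr 1
  rw [min_eq_left] <;> ring_nf <;> linarith

lemma meas_density : Measurable (fun x : ℝ => ENNReal.ofReal (x ^ (-(3:ℝ)/2))) := by
  fun_prop

lemma nu_restrict_small {δ : ℝ} (h1 : δ ≤ 1) :
    counterexampleMeasure.restrict (Set.Ioo 0 δ) =
      (volume.restrict (Set.Ioo (0:ℝ) δ)).withDensity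
        (fun x => ENNReal.ofReal (x ^ (-(3:ℝ)/2))) := by
  have h2 : (2:ℝ) ∉ Set.Ioo (0:ℝ) δ := by
    simp only [Set.mem_Ioo, not_and, not_lt]; intro; linarith
  rw [counterexampleMeasure, Measure.restrict_add,
    restrict_withDensity measurableSet_Ioo, Measure.restrict_restrict measurableSet_Ioo,
    restrict_dirac, if_neg h2, add_zero,
    Set.inter_eq_self_of_subset_left (Set.Ioo_subset_Ioo_right h1)]

lemma nu_restrict_Ioi :
    counterexampleMeasure.restrict (Set.Ioi 0) = counterexampleMeasure := by
  rw [counterexampleMeasure, Measure.restrict_add,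
    restrict_withDensity measurableSet_Ioi, Measure.restrict_restrict measurableSet_Ioi,
    restrict_dirac, if_pos (by norm_num : (2:ℝ) ∈ Set.Ioi (0:ℝ)),
    Set.inter_eq_self_of_subset_right (fun x hx => hx.1)]

lemma inner_eq {y : ℝ} (h0 : 0 < y) (h1 : y < 1) :
    (∫⁻ x in Set.Ioi (0:ℝ),
        ENNReal.ofReal ((f (x + y) - f x - f y) * (x + y)) ∂counterexampleMeasure) =
      ENNReal.ofReal (f (2 + y) * (2 + y)) := by
  have hfm : Measurable fun x : ℝ => ENNReal.ofReal ((f (x + y) - f x - f y) * (x + y)) := by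
    have := f_cont
    fun_prop
  rw [nu_restrict_Ioi, counterexampleMeasure, lintegral_add_measure,
    lintegral_dirac' _ hfm,
    lintegral_withDensity_eq_lintegral_mul _ meas_density hfm]
  have hz0 : ∀ x ∈ Set.Ioo (0:ℝ) 1,
      ((fun x : ℝ => ENNReal.ofReal (x ^ (-(3:ℝ)/2))) *
        fun x : ℝ => ENNReal.ofReal ((f (x + y) - f x - f y) * (x + y))) x =
      (fun _ : ℝ => (0 : ENNReal)) x := by
    intro x hx
    have e1 : f (x + y) = 0 := f_lt_two _ (by rcases hx with ⟨_, hx2⟩; linarith)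
    have e2 : f x = 0 := f_lt_two _ (by rcases hx with ⟨_, hx2⟩; linarith)
    have e3 : f y = 0 := f_lt_two _ (by linarith)
    simp [e1, e2, e3]
  have hz : (∫⁻ x in Set.Ioo (0:ℝ) 1,
      ((fun x : ℝ => ENNReal.ofReal (x ^ (-(3:ℝ)/2))) *
        fun x : ℝ => ENNReal.ofReal ((f (x + y) - f x - f y) * (x + y))) x) = 0 := by
    rw [setLIntegral_congr_fun measurableSet_Ioo hz0, lintegral_zero]
  rw [hz, zero_add, f_two, f_lt_two y (by linarith)]
  norm_num

lemma diverge {δ : ℝ} (h0 : 0 < δ) (h1 : δ < 1) :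
    (∫⁻ y in Set.Ioo (0:ℝ) δ,
        ENNReal.ofReal (f (2 + y) * (2 + y) * y ^ (-(3:ℝ)/2))) = ⊤ := by
  by_contra hfin
  have hle : (∫⁻ y in Set.Ioo (0:ℝ) δ, ENNReal.ofReal (y ^ (-1:ℝ))) ≤
      ∫⁻ y in Set.Ioo (0:ℝ) δ, ENNReal.ofReal (f (2 + y) * (2 + y) * y ^ (-(3:ℝ)/2)) := by
    apply setLIntegral_mono' measurableSet_Ioo
    intro y hy
    apply ENNReal.ofReal_le_ofReal
    have hy0 : 0 < y := hy.1
    have hy1 : y < 1 := lt_of_lt_of_le hy.2 h1.le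
    rw [f_eval hy0 hy1, Real.sqrt_eq_rpow]
    have e : y ^ ((1:ℝ)/2) * y ^ (-(3:ℝ)/2) = y ^ (-1:ℝ) := by
      rw [← Real.rpow_add hy0]; norm_num
    calc y ^ (-1:ℝ) ≤ (2 + y) * y ^ (-1:ℝ) :=
          le_mul_of_one_le_left (Real.rpow_pos_of_pos hy0 _).le (by linarith)
      _ = y ^ ((1:ℝ)/2) * (2 + y) * y ^ (-(3:ℝ)/2) := by rw [← e]; ring
  have hfin' : (∫⁻ y in Set.Ioo (0:ℝ) δ, ENNReal.ofReal (y ^ (-1:ℝ))) < ⊤ :=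
    lt_of_le_of_lt hle (lt_top_iff_ne_top.mpr hfin)
  have hint : IntegrableOn (fun y : ℝ => y ^ (-1:ℝ)) (Set.Ioo 0 δ) := by
    constructor
    · exact ((by fun_prop : Measurable fun y : ℝ => y ^ (-1:ℝ)).aestronglyMeasurable).restrict
    · rw [HasFiniteIntegral, setLIntegral_congr_fun measurableSet_Ioo
        (fun y hy => Real.enorm_eq_ofReal
          (Real.rpow_nonneg hy.1.le _))]
      exact hfin'
  rw [intervalIntegral.integrableOn_Ioo_rpow_iff h0] at hint
  linarith


lemma outer_eq {δ : ℝ} (h0 : 0 < δ) (h1 : δ < 1) :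
    (∫⁻ y in Set.Ioo (0:ℝ) δ,
        (∫⁻ x in Set.Ioi (0:ℝ),
          ENNReal.ofReal ((f (x + y) - f x - f y) * (x + y))
            ∂counterexampleMeasure) ∂counterexampleMeasure) =
      ∫⁻ y in Set.Ioo (0:ℝ) δ,
        ENNReal.ofReal (f (2 + y) * (2 + y) * y ^ (-(3:ℝ)/2)) := by
  have step1 : (∫⁻ y in Set.Ioo (0:ℝ) δ,
      (∫⁻ x in Set.Ioi (0:ℝ),
        ENNReal.ofReal ((f (x + y) - f x - f y) * (x + y))
          ∂counterexampleMeasure) ∂counterexampleMeasure) =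
      ∫⁻ y in Set.Ioo (0:ℝ) δ,
        ENNReal.ofReal (f (2 + y) * (2 + y)) ∂counterexampleMeasure :=
    setLIntegral_congr_fun measurableSet_Ioo (fun y hy =>
      inner_eq hy.1 (lt_of_lt_of_le hy.2 h1.le))
  rw [step1, nu_restrict_small h1.le,
    lintegral_withDensity_eq_lintegral_mul _ meas_density
      (by have := f_cont; fun_prop)]
  refine setLIntegral_congr_fun measurableSet_Ioo (fun y hy => ?_)
  simp only [Pi.mul_apply]
  rw [← ENNReal.ofReal_mul (Real.rpow_nonneg hy.1.le _), mul_comm]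

lemma finite_mass :
    (∫⁻ x, ENNReal.ofReal x ∂counterexampleMeasure) < ⊤ := by
  rw [counterexampleMeasure, lintegral_add_measure, lintegral_dirac,
    lintegral_withDensity_eq_lintegral_mul _ meas_density
      (by fun_prop : Measurable fun x : ℝ => ENNReal.ofReal x)]
  have step : (∫⁻ x in Set.Ioo (0:ℝ) 1,
      ((fun x : ℝ => ENNReal.ofReal (x ^ (-(3:ℝ)/2))) *
        fun x : ℝ => ENNReal.ofReal x) x) =
      ∫⁻ x in Set.Ioo (0:ℝ) 1, ENNReal.ofReal (x ^ (-(1:ℝ)/2)) := by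
    refine setLIntegral_congr_fun measurableSet_Ioo (fun x hx => ?_)
    simp only [Pi.mul_apply]
    rw [← ENNReal.ofReal_mul (Real.rpow_nonneg hx.1.le _)]
    congr 1
    have e := Real.rpow_add hx.1 (-(3:ℝ)/2) 1
    rw [Real.rpow_one] at e
    rw [← e]; norm_num
  rw [step]
  have hint : IntegrableOn (fun x : ℝ => x ^ (-(1:ℝ)/2)) (Set.Ioo 0 1) := by
    rw [intervalIntegral.integrableOn_Ioo_rpow_iff one_pos]; norm_num
  exact ENNReal.add_lt_top.mpr ⟨hint.lintegral_lt_top, ENNReal.ofReal_lt_top⟩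

instance : SFinite counterexampleMeasure := by
  unfold counterexampleMeasure; infer_instance

lemma not_integrable :
    ¬ IntegrableOn
        (fun p : ℝ × ℝ => (f (p.1 + p.2) - f p.1 - f p.2) * (p.1 + p.2))
        ((Set.Ioi (0:ℝ)) ×ˢ (Set.Ioi (0:ℝ)))
        (counterexampleMeasure.prod counterexampleMeasure) := by
  intro hI
  set F : ℝ × ℝ → ℝ := fun p => (f (p.1 + p.2) - f p.1 - f p.2) * (p.1 + p.2) with hF
  have hI2 : IntegrableOn F ((Set.Ioi (0:ℝ)) ×ˢ (Set.Ioo (0:ℝ) (1/2)))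
      (counterexampleMeasure.prod counterexampleMeasure) :=
    hI.mono_set (Set.prod_mono subset_rfl Set.Ioo_subset_Ioi_self)
  have hfin := hI2.2
  rw [HasFiniteIntegral, ← Measure.prod_restrict,
    lintegral_prod_symm' _
      (by have := f_cont; fun_prop : Measurable fun p : ℝ × ℝ => ‖F p‖ₑ)] at hfin
  have hle : (∫⁻ y in Set.Ioo (0:ℝ) (1/2),
      (∫⁻ x in Set.Ioi (0:ℝ),
        ENNReal.ofReal ((f (x + y) - f x - f y) * (x + y))
          ∂counterexampleMeasure) ∂counterexampleMeasure) ≤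
      ∫⁻ y in Set.Ioo (0:ℝ) (1/2),
        (∫⁻ x in Set.Ioi (0:ℝ), ‖F (x, y)‖ₑ ∂counterexampleMeasure)
          ∂counterexampleMeasure :=
    lintegral_mono fun y => lintegral_mono fun x => Real.ofReal_le_enorm _
  rw [outer_eq (by norm_num) (by norm_num), diverge (by norm_num) (by norm_num)] at hle
  exact (lt_irrefl ⊤ (lt_of_le_of_lt hle hfin)).elim

end CEaux

theorem additive_pairing_not_a_measure :
    -- ν has finite mass ∫ x ν(dx) < ∞
    (∫⁻ x, ENNReal.ofReal x ∂counterexampleMeasure) < ⊤ ∧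
    -- yet there is a continuous nonnegative f supported in [2,5] for which
    ∃ f : ℝ → ℝ, Continuous f ∧ (∀ x : ℝ, x ∉ Set.Icc (2:ℝ) 5 → f x = 0) ∧
      (∀ x : ℝ, 0 ≤ f x) ∧
      -- the region (0,δ) × (0,∞) contributes exactly
      -- ∫₀^δ f(2+y)(2+y) y^{−3/2} dy, which diverges:
      (∀ δ : ℝ, δ ∈ Set.Ioo (0:ℝ) 1 →
        (∫⁻ y in Set.Ioo (0:ℝ) δ,
            (∫⁻ x in Set.Ioi (0:ℝ),
              ENNReal.ofReal ((f (x + y) - f x - f y) * (x + y))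
                ∂counterexampleMeasure) ∂counterexampleMeasure) =
          ∫⁻ y in Set.Ioo (0:ℝ) δ,
            ENNReal.ofReal (f (2 + y) * (2 + y) * y ^ (-(3:ℝ)/2)) ∧
        (∫⁻ y in Set.Ioo (0:ℝ) δ,
            ENNReal.ofReal (f (2 + y) * (2 + y) * y ^ (-(3:ℝ)/2))) = ⊤) ∧
      -- hence (x,y) ↦ [f(x+y)−f(x)−f(y)](x+y) is not absolutely integrable with
      -- respect to ν ⊗ ν, and L(ν) is not a measure
      ¬ IntegrableOn
          (fun p : ℝ × ℝ => (f (p.1 + p.2) - f p.1 - f p.2) * (p.1 + p.2))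
          ((Set.Ioi (0:ℝ)) ×ˢ (Set.Ioi (0:ℝ)))
          (counterexampleMeasure.prod counterexampleMeasure) := by
  exact ⟨CEaux.finite_mass, CEaux.f, CEaux.f_cont, CEaux.f_supp, CEaux.f_nonneg,
    fun δ hδ => ⟨CEaux.outer_eq hδ.1 hδ.2, CEaux.diverge hδ.1 hδ.2⟩,
    CEaux.not_integrable⟩
end
end

section
/- Monotone density lemma for desingularized Laplace transforms: Let ψ : [0,∞) → ℝ be such that ∂_s ψ is the Laplace transform of a positive measure (i.e. ∂_s ψ is completely monotone). Let α < 1 and let L be slowly varying at 0. Then the following are equivalent: (1) ψ(s) − ψ(0) ~ s^{1−α} L(s) as s → 0⁺; (2) ∂_s ψ(s) ~ (1−α) s^{−α} L(s) as s → 0⁺. -/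
/-!
Monotone density lemma for desingularized Laplace transforms
(Menon–Pego, Lemma 3.2).
-/

open MeasureTheory Filter Topology Set Real

set_option maxHeartbeats 1000000

noncomputable section

namespace MDLL

lemma tendsto_mul_nhdsWithin' (t : ℝ) (ht : 0 < t) :
    Tendsto (fun s : ℝ => t * s) (𝓝[>] (0:ℝ)) (𝓝[>] (0:ℝ)) := by
  apply tendsto_nhdsWithin_of_tendsto_nhds_of_eventually_within
  · have := ((continuous_const.mul continuous_id : Continuous (fun s : ℝ => t * s))).tendsto (0:ℝ)
    convert this.mono_left nhdsWithin_le_nhds using 2 <;> simp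
  · filter_upwards [self_mem_nhdsWithin] with s hs
    exact mul_pos ht hs

lemma tendsto_rpow_slope' (β : ℝ) :
    Tendsto (fun x : ℝ => (x ^ β - 1) / (x - 1)) (𝓝[≠] (1:ℝ)) (𝓝 β) := by
  have h : HasDerivAt (fun x : ℝ => x ^ β) (β * (1:ℝ) ^ (β - 1)) 1 :=
    Real.hasDerivAt_rpow_const (Or.inl one_ne_zero)
  have h2 := hasDerivAt_iff_tendsto_slope.mp h
  simp only [Real.one_rpow, mul_one] at h2
  have : (fun x : ℝ => (x ^ β - 1) / (x - 1)) = slope (fun x : ℝ => x ^ β) 1 := by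
    ext x
    simp [slope_def_field]
  rw [this]; exact h2

lemma tendsto_one_of_bounds' {f : ℝ → ℝ} {l : Filter ℝ}
    (h : ∀ ε : ℝ, 0 < ε → (∀ᶠ s in l, 1 - ε ≤ f s ∧ f s ≤ 1 + ε)) :
    Tendsto f l (𝓝 1) := by
  rw [Metric.tendsto_nhds]
  intro ε hε
  filter_upwards [h (ε/2) (by linarith)] with s hs
  rw [Real.dist_eq, abs_lt]
  constructor <;> [linarith [hs.2]; linarith [hs.1]]

lemma bwd_dir (ψ : ℝ → ℝ) (α β : ℝ) (hβ : 0 < β) (hβα : β = 1 - α)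
    (L : ℝ → ℝ) (hLpos : ∀ s : ℝ, 0 < s → 0 < L s)
    (hLslow : ∀ t : ℝ, 0 < t →
      Tendsto (fun s => L (t * s) / L s) (𝓝[>] (0:ℝ)) (𝓝 1))
    (key : ∀ a b : ℝ, 0 < a → a ≤ b →
      deriv ψ b * (b - a) ≤ ψ b - ψ a ∧ ψ b - ψ a ≤ deriv ψ a * (b - a))
    (hψ0_le : ∀ s : ℝ, 0 < s → ψ 0 ≤ ψ s)
    (htend0 : ∀ lam s : ℝ, 0 ≤ lam → lam < 1 → 0 < s →
      Tendsto (fun N : ℕ => ψ (lam ^ N * s)) atTop (𝓝 (ψ 0)))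
    (hR : Tendsto (fun s => deriv ψ s / (β * s ^ (-α) * L s)) (𝓝[>] (0:ℝ)) (𝓝 1)) :
    Tendsto (fun s => (ψ s - ψ 0) / (s ^ β * L s)) (𝓝[>] (0:ℝ)) (𝓝 1) := by
  have hslope : Tendsto (fun lam : ℝ => (1 - lam ^ β) / (1 - lam)) (𝓝[<] (1:ℝ)) (𝓝 β) := by
    have h := (tendsto_rpow_slope' β).mono_left
      (nhdsWithin_mono 1 (fun x hx => ne_of_lt hx : Iio (1:ℝ) ⊆ {(1:ℝ)}ᶜ))
    apply h.congr
    intro x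
    rw [← neg_div_neg_eq]
    ring_nf
  apply tendsto_one_of_bounds'
  intro ε hε
  ------------------------------------------------------------------
  -- LOWER BOUND
  ------------------------------------------------------------------
  have hlowev : ∀ᶠ s in 𝓝[>] (0:ℝ), 1 - ε ≤ (ψ s - ψ 0) / (s ^ β * L s) := by
    -- choose lam
    have hlow1 : Tendsto (fun lam : ℝ => β * (1 - lam) / (1 - lam ^ β)) (𝓝[<] (1:ℝ)) (𝓝 1) := by
      have h := (tendsto_const_nhds (x := β) (f := 𝓝[<] (1:ℝ))).div hslope hβ.ne'
      rw [div_self hβ.ne'] at h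
      apply h.congr
      intro lam
      simp only [Pi.div_apply]
      rw [div_div_eq_mul_div]
    have hev := (hlow1.eventually (eventually_gt_nhds (by linarith : 1 - ε/4 < 1))).and
      (eventually_mem_nhdsWithin.mono (fun x hx => hx) |>.and
        (Ioo_mem_nhdsLT_of_mem (⟨zero_lt_one, le_refl 1⟩ : (1:ℝ) ∈ Ioc 0 1)))
    obtain ⟨lam, hlamS, _, hlam0, hlam1⟩ := hev.exists
    have hrl0 : (0:ℝ) < lam ^ β := Real.rpow_pos_of_pos hlam0 β
    have hrl1 : lam ^ β < 1 := Real.rpow_lt_one hlam0.le hlam1 hβ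
    have hgeom : HasSum (fun k : ℕ => (lam ^ β) ^ k) (1 - lam ^ β)⁻¹ :=
      hasSum_geometric_of_lt_one hrl0.le hrl1
    have hps : Tendsto (fun N : ℕ => ∑ k ∈ Finset.range N, β * (1 - lam) * (lam ^ β) ^ k)
        atTop (𝓝 (β * (1 - lam) * (1 - lam ^ β)⁻¹)) :=
      (hgeom.mul_left (β * (1 - lam))).tendsto_sum_nat
    have hlimgt : 1 - ε/2 < β * (1 - lam) * (1 - lam ^ β)⁻¹ := by
      rw [← div_eq_mul_inv]
      linarith
    obtain ⟨N, hN⟩ := (hps.eventually (eventually_gt_nhds hlimgt)).exists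
    -- per-term tendsto
    have hterm : ∀ k : ℕ, Tendsto
        (fun s => deriv ψ (lam ^ k * s) * (lam ^ k * (1 - lam) * s) / (s ^ β * L s))
        (𝓝[>] (0:ℝ)) (𝓝 (β * (1 - lam) * (lam ^ β) ^ k)) := by
      intro k
      have hc0 : (0:ℝ) < lam ^ k := pow_pos hlam0 k
      have hRc := hR.comp (tendsto_mul_nhdsWithin' (lam ^ k) hc0)
      have hLc := hLslow (lam ^ k) hc0
      have hprod : Tendsto (fun s =>
          (deriv ψ (lam ^ k * s) / (β * (lam ^ k * s) ^ (-α) * L (lam ^ k * s)))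
            * (L (lam ^ k * s) / L s) * (β * (1 - lam) * (lam ^ β) ^ k))
          (𝓝[>] (0:ℝ)) (𝓝 (1 * 1 * (β * (1 - lam) * (lam ^ β) ^ k))) :=
        (hRc.mul hLc).mul_const _
      rw [one_mul, one_mul] at hprod
      apply hprod.congr'
      filter_upwards [self_mem_nhdsWithin] with s hs
      have hs : (0:ℝ) < s := hs
      have hcs : (0:ℝ) < lam ^ k * s := by positivity
      have hLs := hLpos s hs
      have hLcs := hLpos _ hcs
      have hcsa := Real.rpow_pos_of_pos hcs (-α)
      have hca := Real.rpow_pos_of_pos hc0 (-α)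
      have hsa := Real.rpow_pos_of_pos hs (-α)
      have hmul : (lam ^ k * s) ^ (-α) = (lam ^ k) ^ (-α) * s ^ (-α) :=
        Real.mul_rpow hc0.le hs.le
      have hsplit : s ^ β = s * s ^ (-α) := by
        rw [hβα, show (1:ℝ) - α = 1 + (-α) by ring, Real.rpow_add hs, Real.rpow_one]
      have hcb : ((lam ^ k : ℝ)) ^ (-α) * (lam ^ k : ℝ) = (lam ^ β) ^ k := by
        rw [← Real.rpow_natCast lam k, ← Real.rpow_natCast (lam ^ β) k,
          ← Real.rpow_mul hlam0.le, ← Real.rpow_mul hlam0.le, ← Real.rpow_add hlam0]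
        congr 1
        rw [hβα]
        push_cast
        ring
      rw [hmul, hsplit]
      rw [← hcb]
      field_simp
    have hsumT : Tendsto (fun s => ∑ k ∈ Finset.range N,
        deriv ψ (lam ^ k * s) * (lam ^ k * (1 - lam) * s) / (s ^ β * L s))
        (𝓝[>] (0:ℝ)) (𝓝 (∑ k ∈ Finset.range N, β * (1 - lam) * (lam ^ β) ^ k)) :=
      tendsto_finset_sum _ (fun k _ => hterm k)
    have hsum_le : ∀ᶠ s in 𝓝[>] (0:ℝ), ∑ k ∈ Finset.range N,
        deriv ψ (lam ^ k * s) * (lam ^ k * (1 - lam) * s) / (s ^ β * L s)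
        ≤ (ψ s - ψ 0) / (s ^ β * L s) := by
      filter_upwards [self_mem_nhdsWithin] with s hs
      have hs : (0:ℝ) < s := hs
      have hD : (0:ℝ) < s ^ β * L s := mul_pos (Real.rpow_pos_of_pos hs β) (hLpos s hs)
      rw [← Finset.sum_div, div_le_div_iff_of_pos_right hD]
      have htele : ∑ k ∈ Finset.range N, (ψ (lam ^ k * s) - ψ (lam ^ (k+1) * s))
          = ψ (lam ^ 0 * s) - ψ (lam ^ N * s) :=
        Finset.sum_range_sub' (fun k => ψ (lam ^ k * s)) N
      have hstep : ∀ k ∈ Finset.range N, deriv ψ (lam ^ k * s) * (lam ^ k * (1 - lam) * s)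
          ≤ ψ (lam ^ k * s) - ψ (lam ^ (k+1) * s) := by
        intro k _
        have ha : (0:ℝ) < lam ^ (k+1) * s := by positivity
        have hab : lam ^ (k+1) * s ≤ lam ^ k * s := by
          apply mul_le_mul_of_nonneg_right _ hs.le
          calc lam ^ (k+1) = lam ^ k * lam := pow_succ lam k
            _ ≤ lam ^ k * 1 := by nlinarith [pow_pos hlam0 k]
            _ = lam ^ k := mul_one _
        have hk := (key _ _ ha hab).1
        calc deriv ψ (lam ^ k * s) * (lam ^ k * (1 - lam) * s)
            = deriv ψ (lam ^ k * s) * (lam ^ k * s - lam ^ (k+1) * s) := by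
              rw [pow_succ]; ring
          _ ≤ _ := hk
      calc ∑ k ∈ Finset.range N, deriv ψ (lam ^ k * s) * (lam ^ k * (1 - lam) * s)
          ≤ ∑ k ∈ Finset.range N, (ψ (lam ^ k * s) - ψ (lam ^ (k+1) * s)) :=
            Finset.sum_le_sum hstep
        _ = ψ (lam ^ 0 * s) - ψ (lam ^ N * s) := htele
        _ ≤ ψ s - ψ 0 := by
            have h1 := hψ0_le (lam ^ N * s) (by positivity)
            simp only [pow_zero, one_mul]
            linarith
    filter_upwards [hsum_le, hsumT.eventually (eventually_gt_nhds hN)] with s h1 h2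
    linarith
  ------------------------------------------------------------------
  -- UPPER BOUND
  ------------------------------------------------------------------
  have hupev : ∀ᶠ s in 𝓝[>] (0:ℝ), (ψ s - ψ 0) / (s ^ β * L s) ≤ 1 + ε := by
    have hT1 : Tendsto (fun lam : ℝ => (1 - (1 + (1-lam)^2) * lam ^ β) / (1 - lam))
        (𝓝[<] (1:ℝ)) (𝓝 β) := by
      have h2 : Tendsto (fun lam : ℝ => (1 - lam ^ β) / (1 - lam) - (1 - lam) * lam ^ β)
          (𝓝[<] (1:ℝ)) (𝓝 (β - 0)) := by
        apply hslope.sub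
        have ha : Tendsto (fun lam : ℝ => 1 - lam) (𝓝[<] (1:ℝ)) (𝓝 0) := by
          have := ((continuous_const.sub continuous_id :
            Continuous (fun lam : ℝ => 1 - lam))).tendsto 1
          convert this.mono_left nhdsWithin_le_nhds using 2 <;> simp
        have hb : Tendsto (fun lam : ℝ => lam ^ β) (𝓝[<] (1:ℝ)) (𝓝 1) := by
          have hc : ContinuousAt (fun x : ℝ => x ^ β) 1 :=
            Real.continuousAt_rpow_const 1 β (Or.inl one_ne_zero)
          simpa using hc.tendsto.mono_left (nhdsWithin_le_nhds (s := Iio (1:ℝ)))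
        simpa using ha.mul hb
      rw [sub_zero] at h2
      apply h2.congr'
      filter_upwards [self_mem_nhdsWithin] with lam hlam
      have h1 : (1:ℝ) - lam ≠ 0 := sub_ne_zero.mpr (ne_of_gt hlam)
      field_simp
      ring
    have hT2 : Tendsto (fun lam : ℝ => β * (1 - lam) * lam ^ (-α) * (1 + (1-lam)^2)^2
        / (1 - (1 + (1-lam)^2) * lam ^ β)) (𝓝[<] (1:ℝ)) (𝓝 1) := by
      have hnum : Tendsto (fun lam : ℝ => β * lam ^ (-α) * (1 + (1-lam)^2)^2)
          (𝓝[<] (1:ℝ)) (𝓝 (β * 1 * 1)) := by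
        apply Tendsto.mul
        · apply Tendsto.mul tendsto_const_nhds
          have hc : ContinuousAt (fun x : ℝ => x ^ (-α)) 1 :=
            Real.continuousAt_rpow_const 1 (-α) (Or.inl one_ne_zero)
          simpa using hc.tendsto.mono_left (nhdsWithin_le_nhds (s := Iio (1:ℝ)))
        · have hcont : Continuous (fun lam : ℝ => (1 + (1-lam)^2)^2) := by continuity
          have := hcont.tendsto 1
          simpa using this.mono_left (nhdsWithin_le_nhds (s := Iio (1:ℝ)))
      have hq := hnum.div hT1 hβ.ne'
      rw [show β * 1 * 1 / β = 1 by field_simp] at hq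
      apply hq.congr
      intro lam
      simp only [Pi.div_apply]
      rw [div_div_eq_mul_div]
      ring_nf
    have hev2 := (hT2.eventually (eventually_lt_nhds (by linarith : (1:ℝ) < 1 + ε/2))).and
      ((hT1.eventually (eventually_gt_nhds (by linarith : (0:ℝ) < β))).and
        (Ioo_mem_nhdsLT_of_mem (⟨zero_lt_one, le_refl 1⟩ : (1:ℝ) ∈ Ioc 0 1)))
    obtain ⟨lam, hC, hT1v, hlam0, hlam1⟩ := hev2.exists
    have h1l : (0:ℝ) < 1 - lam := by linarith
    set e : ℝ := (1 - lam)^2 with he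
    have he0 : (0:ℝ) < e := pow_pos h1l 2
    have hrrpos : (0:ℝ) < 1 - (1+e) * lam ^ β := by
      have heq : 1 - (1+e) * lam ^ β
          = ((1 - (1+e) * lam ^ β) / (1 - lam)) * (1 - lam) := by
        field_simp
      rw [heq]
      exact mul_pos hT1v h1l
    have hrr1 : (1+e) * lam ^ β < 1 := by linarith
    have hrr0 : (0:ℝ) ≤ (1+e) * lam ^ β := by
      have := Real.rpow_pos_of_pos hlam0 β
      nlinarith
    -- extract s₀
    have hAev : ∀ᶠ u in 𝓝[>] (0:ℝ), deriv ψ u ≤ (1+e) * (β * u ^ (-α) * L u) := by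
      filter_upwards [hR.eventually (eventually_lt_nhds (by linarith : (1:ℝ) < 1+e)),
        self_mem_nhdsWithin] with u h1 hu
      have hu : (0:ℝ) < u := hu
      have hden : (0:ℝ) < β * u ^ (-α) * L u := by
        have h2 := Real.rpow_pos_of_pos hu (-α); have h3 := hLpos u hu; positivity
      rw [div_lt_iff₀ hden] at h1
      nlinarith
    have hBev : ∀ᶠ u in 𝓝[>] (0:ℝ), L (lam * u) ≤ (1+e) * L u := by
      filter_upwards [(hLslow lam hlam0).eventually
        (eventually_lt_nhds (by linarith : (1:ℝ) < 1+e)), self_mem_nhdsWithin] with u h1 hu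
      have hu : (0:ℝ) < u := hu
      rw [div_lt_iff₀ (hLpos u hu)] at h1
      nlinarith
    have hAB := hAev.and hBev
    rw [(nhdsGT_basis (0:ℝ)).eventually_iff] at hAB
    obtain ⟨s₀, hs₀pos, hs₀⟩ := hAB
    filter_upwards [Ioo_mem_nhdsGT_of_mem (⟨le_refl 0, hs₀pos⟩ : (0:ℝ) ∈ Ico 0 s₀)] with s hsIoo
    obtain ⟨hs, hss₀⟩ := hsIoo
    have hD : (0:ℝ) < s ^ β * L s := mul_pos (Real.rpow_pos_of_pos hs β) (hLpos s hs)
    rw [div_le_iff₀ hD]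
    have hmem : ∀ k : ℕ, lam ^ k * s ∈ Ioo (0:ℝ) s₀ := by
      intro k
      refine ⟨by positivity, lt_of_le_of_lt ?_ hss₀⟩
      calc lam ^ k * s ≤ 1 * s := by
            apply mul_le_mul_of_nonneg_right _ hs.le
            exact pow_le_one₀ hlam0.le hlam1.le
        _ = s := one_mul s
    have hiter : ∀ k : ℕ, L (lam ^ k * s) ≤ (1+e)^k * L s := by
      intro k
      induction k with
      | zero => simp
      | succ k ih =>
        have hmk := hmem k
        have hb := (hs₀ hmk).2
        have hLk := hLpos _ hmk.1
        calc L (lam ^ (k+1) * s) = L (lam * (lam ^ k * s)) := by rw [pow_succ]; ring_nf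
          _ ≤ (1+e) * L (lam ^ k * s) := hb
          _ ≤ (1+e) * ((1+e)^k * L s) := by nlinarith [pow_pos (by linarith : (0:ℝ) < 1+e) k]
          _ = (1+e)^(k+1) * L s := by ring
    set A0 : ℝ := (1+e)^2 * β * lam ^ (-α) * (1 - lam) * (s ^ β * L s) with hA0
    have hterm2 : ∀ k : ℕ, ψ (lam ^ k * s) - ψ (lam ^ (k+1) * s) ≤ A0 * ((1+e)*lam ^ β)^k := by
      intro k
      have ha : (0:ℝ) < lam ^ (k+1) * s := by positivity
      have hab : lam ^ (k+1) * s ≤ lam ^ k * s := by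
        apply mul_le_mul_of_nonneg_right _ hs.le
        calc lam ^ (k+1) = lam ^ k * lam := pow_succ lam k
          _ ≤ lam ^ k * 1 := by nlinarith [pow_pos hlam0 k]
          _ = lam ^ k := mul_one _
      have hkey := (key _ _ ha hab).2
      have hd : lam ^ k * s - lam ^ (k+1) * s = lam ^ k * ((1 - lam) * s) := by
        rw [pow_succ]; ring
      rw [hd] at hkey
      have hd0 : (0:ℝ) ≤ lam ^ k * ((1 - lam) * s) :=
        mul_nonneg (pow_nonneg hlam0.le k) (mul_nonneg h1l.le hs.le)
      have hk1mem := hmem (k+1)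
      have hAa := (hs₀ hk1mem).1
      have hLb := hiter (k+1)
      have hrpa : (0:ℝ) < (lam ^ (k+1) * s) ^ (-α) := Real.rpow_pos_of_pos ha (-α)
      calc ψ (lam ^ k * s) - ψ (lam ^ (k+1) * s)
          ≤ deriv ψ (lam ^ (k+1) * s) * (lam ^ k * ((1 - lam) * s)) := hkey
        _ ≤ ((1+e) * (β * (lam ^ (k+1) * s) ^ (-α) * L (lam ^ (k+1) * s)))
              * (lam ^ k * ((1 - lam) * s)) := mul_le_mul_of_nonneg_right hAa hd0
        _ ≤ ((1+e) * (β * (lam ^ (k+1) * s) ^ (-α) * ((1+e)^(k+1) * L s)))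
              * (lam ^ k * ((1 - lam) * s)) := by
            apply mul_le_mul_of_nonneg_right _ hd0
            apply mul_le_mul_of_nonneg_left _ (by linarith)
            apply mul_le_mul_of_nonneg_left hLb (by positivity)
        _ = A0 * ((1+e)*lam ^ β)^k := by
            rw [hA0, Real.mul_rpow (pow_nonneg hlam0.le (k+1)) hs.le, mul_pow]
            have hsb : s ^ β = s * s ^ (-α) := by
              rw [hβα, show (1:ℝ) - α = 1 + (-α) by ring, Real.rpow_add hs, Real.rpow_one]
            have hlid : ((lam ^ (k+1) : ℝ)) ^ (-α) * lam ^ k = lam ^ (-α) * (lam ^ β) ^ k := by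
              rw [← Real.rpow_natCast lam (k+1), ← Real.rpow_natCast lam k,
                ← Real.rpow_natCast (lam ^ β) k, ← Real.rpow_mul hlam0.le,
                ← Real.rpow_mul hlam0.le, ← Real.rpow_add hlam0, ← Real.rpow_add hlam0]
              congr 1
              rw [hβα]
              push_cast
              ring
            rw [hsb]
            linear_combination ((1+e)^(k+2) * β * s ^ (-α) * L s * (1 - lam) * s) * hlid
    have hpow1 : ∀ NN : ℕ, ψ s - ψ (lam ^ NN * s) ≤ A0 * (1 - (1+e)*lam ^ β)⁻¹ := by
      intro NN
      have htel : ∑ k ∈ Finset.range NN, (ψ (lam ^ k * s) - ψ (lam ^ (k+1) * s))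
          = ψ (lam ^ 0 * s) - ψ (lam ^ NN * s) :=
        Finset.sum_range_sub' (fun k => ψ (lam ^ k * s)) NN
      have hsum : ψ s - ψ (lam ^ NN * s) ≤ ∑ k ∈ Finset.range NN, A0 * ((1+e)*lam ^ β)^k := by
        have h0 : ψ (lam ^ 0 * s) = ψ s := by norm_num
        rw [← h0, ← htel]
        exact Finset.sum_le_sum (fun k _ => hterm2 k)
      have hgs : ∑ k ∈ Finset.range NN, ((1+e)*lam ^ β)^k ≤ (1 - (1+e)*lam ^ β)⁻¹ :=
        sum_le_hasSum (Finset.range NN) (fun i _ => pow_nonneg hrr0 i)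
          (hasSum_geometric_of_lt_one hrr0 hrr1)
      have hA0nn : (0:ℝ) ≤ A0 := by
        rw [hA0]
        have h2 := Real.rpow_pos_of_pos hlam0 (-α)
        have := mul_pos (mul_pos (mul_pos (mul_pos
          (pow_pos (by linarith : (0:ℝ) < 1+e) 2) hβ) h2) h1l) hD
        linarith
      calc ψ s - ψ (lam ^ NN * s) ≤ ∑ k ∈ Finset.range NN, A0 * ((1+e)*lam ^ β)^k := hsum
        _ = A0 * ∑ k ∈ Finset.range NN, ((1+e)*lam ^ β)^k := by rw [Finset.mul_sum]
        _ ≤ A0 * (1 - (1+e)*lam ^ β)⁻¹ := mul_le_mul_of_nonneg_left hgs hA0nn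
    have hfin : ψ s - ψ 0 ≤ A0 * (1 - (1+e)*lam ^ β)⁻¹ := by
      have htl : Tendsto (fun NN : ℕ => ψ s - ψ (lam ^ NN * s)) atTop (𝓝 (ψ s - ψ 0)) :=
        tendsto_const_nhds.sub (htend0 lam s hlam0.le hlam1 hs)
      exact le_of_tendsto htl (Filter.Eventually.of_forall hpow1)
    have hCs : A0 * (1 - (1+e)*lam ^ β)⁻¹
        = (β * (1 - lam) * lam ^ (-α) * (1+e)^2 / (1 - (1+e) * lam ^ β)) * (s ^ β * L s) := by
      rw [hA0]
      ring
    have hCbound : A0 * (1 - (1+e)*lam ^ β)⁻¹ ≤ (1+ε) * (s ^ β * L s) := by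
      rw [hCs]
      apply mul_le_mul_of_nonneg_right _ hD.le
      linarith
    linarith
  filter_upwards [hlowev, hupev] with s h1 h2
  exact ⟨h1, h2⟩

lemma fwd_dir (ψ : ℝ → ℝ) (α β : ℝ) (hβ : 0 < β) (hβα : β = 1 - α)
    (L : ℝ → ℝ) (hLpos : ∀ s : ℝ, 0 < s → 0 < L s)
    (hLslow : ∀ t : ℝ, 0 < t →
      Tendsto (fun s => L (t * s) / L s) (𝓝[>] (0:ℝ)) (𝓝 1))
    (key : ∀ a b : ℝ, 0 < a → a ≤ b →
      deriv ψ b * (b - a) ≤ ψ b - ψ a ∧ ψ b - ψ a ≤ deriv ψ a * (b - a))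
    (hQ : Tendsto (fun s => (ψ s - ψ 0) / (s ^ β * L s)) (𝓝[>] (0:ℝ)) (𝓝 1)) :
    Tendsto (fun s => deriv ψ s / (β * s ^ (-α) * L s)) (𝓝[>] (0:ℝ)) (𝓝 1) := by
  have hαβ : α = 1 - β := by linarith
  apply tendsto_one_of_bounds'
  intro ε hε
  -- limits of g t and t^α * g t as t → 1⁺
  have hg : Tendsto (fun t : ℝ => (t ^ β - 1) / (t - 1) / β) (𝓝[>] (1:ℝ)) (𝓝 1) := by
    have := (tendsto_rpow_slope' β).mono_left
      (nhdsWithin_mono 1 (fun x hx => ne_of_gt hx : Ioi (1:ℝ) ⊆ {(1:ℝ)}ᶜ))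
    have h2 := this.div_const β
    simpa [div_self hβ.ne'] using h2
  have hpow : Tendsto (fun t : ℝ => t ^ α) (𝓝[>] (1:ℝ)) (𝓝 1) := by
    have hc : ContinuousAt (fun t : ℝ => t ^ α) 1 :=
      Real.continuousAt_rpow_const 1 α (Or.inl one_ne_zero)
    have := hc.tendsto.mono_left (nhdsWithin_le_nhds (s := Ioi (1:ℝ)))
    simpa using this
  have hg2 : Tendsto (fun t : ℝ => t ^ α * ((t ^ β - 1) / (t - 1) / β)) (𝓝[>] (1:ℝ)) (𝓝 1) := by
    simpa using hpow.mul hg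
  -- choose t
  obtain ⟨t, ht1, hgt, hgt2⟩ :
      ∃ t : ℝ, 1 < t ∧ 1 - ε/2 < (t ^ β - 1) / (t - 1) / β ∧
        t ^ α * ((t ^ β - 1) / (t - 1) / β) < 1 + ε/2 := by
    have h1 := hg.eventually (eventually_gt_nhds (by linarith : (1:ℝ) - ε/2 < 1))
    have h2 := hg2.eventually (eventually_lt_nhds (by linarith : (1:ℝ) < 1 + ε/2))
    obtain ⟨t, ht⟩ := (((h1.and h2).and self_mem_nhdsWithin).exists)
    exact ⟨t, ht.2, ht.1.1, ht.1.2⟩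
  have ht0 : (0:ℝ) < t := by linarith
  have ht1' : t - 1 ≠ 0 := sub_ne_zero.mpr (ne_of_gt ht1)
  -- lower bound: eventually (ψ(ts)-ψ s)/((t-1)s) / denom ≤ R s
  have hlow : ∀ᶠ s in 𝓝[>] (0:ℝ),
      (ψ (t*s) - ψ s) / ((t-1)*s) / (β * s ^ (-α) * L s) ≤ deriv ψ s / (β * s ^ (-α) * L s) := by
    filter_upwards [self_mem_nhdsWithin] with s hs
    have hs : (0:ℝ) < s := hs
    have hden : (0:ℝ) < β * s ^ (-α) * L s := by
      have h1 := Real.rpow_pos_of_pos hs (-α); have h2 := hLpos s hs; positivity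
    rw [div_le_div_iff_of_pos_right hden]
    have hk := (key s (t*s) hs (by nlinarith)).2
    rw [div_le_iff₀ (by nlinarith : (0:ℝ) < (t-1)*s)]
    nlinarith
  -- tendsto of the lower comparison function
  have hQt := hQ.comp (tendsto_mul_nhdsWithin' t ht0)
  have hLt := hLslow t ht0
  have hlowT : Tendsto (fun s => (ψ (t*s) - ψ s) / ((t-1)*s) / (β * s ^ (-α) * L s))
      (𝓝[>] (0:ℝ)) (𝓝 ((t ^ β - 1) / (t - 1) / β)) := by
    have hW : Tendsto (fun s => (((ψ (t*s) - ψ 0)/((t*s)^β * L (t*s))) * t^β * (L (t*s)/L s)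
        - (ψ s - ψ 0)/(s^β * L s)) / (β*(t-1))) (𝓝[>] (0:ℝ))
        (𝓝 ((1 * t^β * 1 - 1) / (β*(t-1)))) := by
      exact (((hQt.mul_const (t^β)).mul hLt).sub hQ).div_const (β*(t-1))
    have hval : (1 * t^β * 1 - 1) / (β*(t-1)) = (t ^ β - 1) / (t - 1) / β := by
      rw [div_div]; ring_nf
    rw [hval] at hW
    apply hW.congr'
    filter_upwards [self_mem_nhdsWithin] with s hs
    have hs : (0:ℝ) < s := hs
    have hts : (0:ℝ) < t*s := by positivity
    have hLs := hLpos s hs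
    have hLts := hLpos _ hts
    have hsa := Real.rpow_pos_of_pos hs (-α)
    have hsb := Real.rpow_pos_of_pos hs β
    have htsb := Real.rpow_pos_of_pos hts β
    have hmul : (t*s)^β = t^β * s^β := Real.mul_rpow ht0.le hs.le
    have hsplit : s^β = s * s^(-α) := by
      rw [hβα, show (1:ℝ)-α = 1 + (-α) by ring, Real.rpow_add hs, Real.rpow_one]
    field_simp
    rw [hmul, hsplit]
    ring
  -- upper bound part
  have hup : ∀ᶠ s in 𝓝[>] (0:ℝ),
      deriv ψ (t*s) / (β * (t*s) ^ (-α) * L (t*s)) ≤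
        (ψ (t*s) - ψ s) / ((t-1)*s) / (β * (t*s) ^ (-α) * L (t*s)) := by
    filter_upwards [self_mem_nhdsWithin] with s hs
    have hs : (0:ℝ) < s := hs
    have hts : (0:ℝ) < t*s := by positivity
    have hden : (0:ℝ) < β * (t*s) ^ (-α) * L (t*s) := by
      have h1 := Real.rpow_pos_of_pos hts (-α); have h2 := hLpos _ hts; positivity
    rw [div_le_div_iff_of_pos_right hden]
    have hk := (key s (t*s) hs (by nlinarith)).1
    rw [le_div_iff₀ (by nlinarith : (0:ℝ) < (t-1)*s)]
    nlinarith
  have hupT : Tendsto (fun s => (ψ (t*s) - ψ s) / ((t-1)*s) / (β * (t*s) ^ (-α) * L (t*s)))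
      (𝓝[>] (0:ℝ)) (𝓝 (t ^ α * ((t ^ β - 1) / (t - 1) / β))) := by
    have hV : Tendsto (fun s => (((ψ (t*s) - ψ 0)/((t*s)^β * L (t*s))) * t^β
        - ((ψ s - ψ 0)/(s^β * L s)) * (L (t*s)/L s)⁻¹) * t^α / ((t-1)*β)) (𝓝[>] (0:ℝ))
        (𝓝 ((1 * t^β - 1 * 1⁻¹) * t^α / ((t-1)*β))) := by
      exact (((hQt.mul_const (t^β)).sub (hQ.mul (hLt.inv₀ one_ne_zero))).mul_const (t^α)).div_const ((t-1)*β)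
    have hval : (1 * t^β - 1 * 1⁻¹) * t^α / ((t-1)*β) = t ^ α * ((t ^ β - 1) / (t - 1) / β) := by
      rw [div_div]; ring_nf
    rw [hval] at hV
    apply hV.congr'
    filter_upwards [self_mem_nhdsWithin] with s hs
    have hs : (0:ℝ) < s := hs
    have hts : (0:ℝ) < t*s := by positivity
    have hLs := hLpos s hs
    have hLts := hLpos _ hts
    have hsb := Real.rpow_pos_of_pos hs β
    have htsb := Real.rpow_pos_of_pos hts β
    have htsa := Real.rpow_pos_of_pos hts (-α)
    have hmul : (t*s)^β = t^β * s^β := Real.mul_rpow ht0.le hs.le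
    have hta : t^α * t^(-α) = 1 := by
      rw [← Real.rpow_add ht0]; simp
    have hmina : (t*s)^(-α) = t^(-α) * s^(-α) := Real.mul_rpow ht0.le hs.le
    have hsplit : s^β = s * s^(-α) := by
      rw [hβα, show (1:ℝ)-α = 1 + (-α) by ring, Real.rpow_add hs, Real.rpow_one]
    have hta' : t^α = (t^(-α))⁻¹ := by rw [Real.rpow_neg ht0.le, inv_inv]
    rw [hta', hmul, hmina, hsplit]
    have hya := Real.rpow_pos_of_pos ht0 (-α)
    field_simp
    ring
  -- combine
  have hlowev : ∀ᶠ s in 𝓝[>] (0:ℝ), 1 - ε ≤ deriv ψ s / (β * s ^ (-α) * L s) := by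
    filter_upwards [hlow, hlowT.eventually (eventually_gt_nhds hgt)] with s h1 h2
    linarith
  have hupev : ∀ᶠ s in 𝓝[>] (0:ℝ), deriv ψ s / (β * s ^ (-α) * L s) ≤ 1 + ε := by
    have hcomb : ∀ᶠ s in 𝓝[>] (0:ℝ),
        deriv ψ (t*s) / (β * (t*s) ^ (-α) * L (t*s)) ≤ 1 + ε := by
      filter_upwards [hup, hupT.eventually (eventually_lt_nhds hgt2)] with s h1 h2
      linarith
    have hpull := (tendsto_mul_nhdsWithin' (1/t) (by positivity)).eventually hcomb
    filter_upwards [hpull] with u hu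
    rw [show t*((1/t)*u) = u by field_simp] at hu
    exact hu
  filter_upwards [hlowev, hupev] with s h1 h2
  exact ⟨h1, h2⟩

end MDLL

theorem monotone_density_laplace_lemma
    -- ψ : [0,∞) → ℝ whose derivative is the Laplace transform of a
    -- positive measure μ on [0,∞)
    (ψ : ℝ → ℝ)
    (μ : Measure ℝ) (hμsupp : μ (Set.Iio 0) = 0)
    (hψ0 : ContinuousWithinAt ψ (Set.Ici 0) 0)
    (hψd : ∀ s : ℝ, 0 < s →
      Integrable (fun x => Real.exp (-(s * x))) μ ∧
      HasDerivAt ψ (∫ x, Real.exp (-(s * x)) ∂μ) s)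
    -- α < 1, and L slowly varying at 0
    (α : ℝ) (hα : α < 1)
    (L : ℝ → ℝ) (hLpos : ∀ s : ℝ, 0 < s → 0 < L s)
    (hLslow : ∀ t : ℝ, 0 < t →
      Tendsto (fun s => L (t * s) / L s) (𝓝[>] (0:ℝ)) (𝓝 1)) :
    -- (1) ψ(s) − ψ(0) ~ s^{1−α} L(s)  ⟺  (2) ψ′(s) ~ (1−α) s^{−α} L(s), as s → 0⁺
    (Tendsto (fun s => (ψ s - ψ 0) / (s ^ (1 - α) * L s)) (𝓝[>] (0:ℝ)) (𝓝 1)) ↔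
    (Tendsto (fun s => deriv ψ s / ((1 - α) * s ^ (-α) * L s)) (𝓝[>] (0:ℝ)) (𝓝 1)) := by
  have hβ : (0:ℝ) < 1 - α := by linarith
  -- a.e. nonneg
  have hae : ∀ᵐ x ∂μ, 0 ≤ x := by
    rw [ae_iff]
    convert hμsupp using 2
    ext x; simp
  have hd_eq : ∀ s : ℝ, 0 < s → deriv ψ s = ∫ x, Real.exp (-(s * x)) ∂μ :=
    fun s hs => (hψd s hs).2.deriv
  have hd_nonneg : ∀ s : ℝ, 0 < s → 0 ≤ deriv ψ s := by
    intro s hs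
    rw [hd_eq s hs]
    exact integral_nonneg fun x => (Real.exp_pos _).le
  have hd_anti : ∀ a b : ℝ, 0 < a → a ≤ b → deriv ψ b ≤ deriv ψ a := by
    intro a b ha hab
    rw [hd_eq a ha, hd_eq b (lt_of_lt_of_le ha hab)]
    apply integral_mono_ae (hψd b (lt_of_lt_of_le ha hab)).1 (hψd a ha).1
    filter_upwards [hae] with x hx
    apply Real.exp_le_exp.mpr
    simp only [neg_le_neg_iff]
    exact mul_le_mul_of_nonneg_right hab hx
  have hdiff : ∀ u : ℝ, 0 < u → DifferentiableAt ℝ ψ u :=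
    fun u hu => (hψd u hu).2.differentiableAt
  -- mean value inequalities
  have key : ∀ a b : ℝ, 0 < a → a ≤ b →
      deriv ψ b * (b - a) ≤ ψ b - ψ a ∧ ψ b - ψ a ≤ deriv ψ a * (b - a) := by
    intro a b ha hab
    have hb : 0 < b := lt_of_lt_of_le ha hab
    have hIcc : Icc a b ⊆ Ioi (0:ℝ) := fun u hu => lt_of_lt_of_le ha hu.1
    have hIoo : Ioo a b ⊆ Ioi (0:ℝ) := fun u hu => lt_of_lt_of_le ha hu.1.le
    have hcont : ContinuousOn ψ (Icc a b) :=
      fun u hu => ((hdiff u (hIcc hu)).continuousAt).continuousWithinAt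
    constructor
    · set c := deriv ψ b with hc
      have hmono : MonotoneOn (fun u => ψ u - c * u) (Icc a b) := by
        apply monotoneOn_of_deriv_nonneg (convex_Icc a b)
          (hcont.sub (continuous_const.mul continuous_id).continuousOn)
        · intro u hu
          rw [interior_Icc] at hu
          exact ((hdiff u (hIoo hu)).sub ((differentiable_id.const_mul c) u)).differentiableWithinAt
        · intro u hu
          rw [interior_Icc] at hu
          have hu0 : 0 < u := hIoo hu
          show 0 ≤ deriv (fun y => ψ y - c * id y) u
          rw [deriv_fun_sub (hdiff u hu0) ((differentiable_id.const_mul c) u)]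
          simp only [deriv_const_mul_field, deriv_id'', deriv_id, mul_one]
          have := hd_anti u b hu0 hu.2.le
          linarith
      have := hmono (left_mem_Icc.mpr hab) (right_mem_Icc.mpr hab) hab
      simp only at this
      nlinarith
    · set c := deriv ψ a with hc
      have hmono : MonotoneOn (fun u => c * u - ψ u) (Icc a b) := by
        apply monotoneOn_of_deriv_nonneg (convex_Icc a b)
          ((continuous_const.mul continuous_id).continuousOn.sub hcont)
        · intro u hu
          rw [interior_Icc] at hu
          exact (((differentiable_id.const_mul c) u).sub (hdiff u (hIoo hu))).differentiableWithinAt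
        · intro u hu
          rw [interior_Icc] at hu
          have hu0 : 0 < u := hIoo hu
          show 0 ≤ deriv (fun y => c * id y - ψ y) u
          rw [deriv_fun_sub ((differentiable_id.const_mul c) u) (hdiff u hu0)]
          simp only [deriv_const_mul_field, deriv_id'', deriv_id, mul_one]
          have := hd_anti a u ha hu.1.le
          linarith
      have := hmono (left_mem_Icc.mpr hab) (right_mem_Icc.mpr hab) hab
      simp only at this
      nlinarith
  -- ψ is monotone on (0,∞)
  have hψ_mono : ∀ a b : ℝ, 0 < a → a ≤ b → ψ a ≤ ψ b := by
    intro a b ha hab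
    have h1 := (key a b ha hab).1
    have h2 := hd_nonneg b (lt_of_lt_of_le ha hab)
    nlinarith
  have hψ0_le : ∀ s : ℝ, 0 < s → ψ 0 ≤ ψ s := by
    intro s hs
    have h1 : Tendsto ψ (𝓝[>] (0:ℝ)) (𝓝 (ψ 0)) :=
      hψ0.tendsto.mono_left (nhdsWithin_mono 0 Ioi_subset_Ici_self)
    apply le_of_tendsto h1
    filter_upwards [Ioo_mem_nhdsGT_of_mem
      (by constructor <;> simp [hs] : (0:ℝ) ∈ Ico 0 s)] with a ha
    exact hψ_mono a s ha.1 ha.2.le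
  have htend0 : ∀ lam s : ℝ, 0 ≤ lam → lam < 1 → 0 < s →
      Tendsto (fun N : ℕ => ψ (lam ^ N * s)) atTop (𝓝 (ψ 0)) := by
    intro lam s hl0 hl1 hs
    apply hψ0.tendsto.comp
    rw [tendsto_nhdsWithin_iff]
    constructor
    · have := (tendsto_pow_atTop_nhds_zero_of_lt_one hl0 hl1).mul_const s
      simpa using this
    · filter_upwards with N
      simp only [Set.mem_Ici]
      positivity
  constructor
  · intro hQ
    exact MDLL.fwd_dir ψ α (1-α) hβ rfl L hLpos hLslow key hQ
  · intro hR
    exact MDLL.bwd_dir ψ α (1-α) hβ rfl L hLpos hLslow key hψ0_le htend0 hR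
end
end

section
/- Inadmissibility of ρ > 1 for scaling profiles of the additive kernel: Let ρ > 1 and c > 0. Then there is no positive Radon measure ν on (0,∞) with ∫ x ν(dx) = 1 such that φ(ξ) = ∫ (1−e^{−ξx}) ν(dx) satisfies ξ = φ(ξ) + c φ(ξ)^{1+ρ} for all ξ > 0. Equivalently: if U(ξ) = φ(ξ)/ξ, then U is the Laplace transform of the tail distribution x ↦ ν((x,∞)), U(0⁺) = 1, U is completely monotone and nonconstant, but the relation forces U′(ξ) = −c ξ^{ρ−1} U^{1+ρ} / (1 + c(ρ+1) ξ^ρ U^ρ) → 0 as ξ → 0⁺, which is impossible for a nonconstant completely monotone function. -/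
/-!
Inadmissibility of ρ > 1 for scaling profiles of the additive kernel
(Menon–Pego, Section 6.2).
-/

open MeasureTheory Filter Topology Set Real
open scoped ENNReal NNReal

noncomputable section

lemma quad_bound (t : ℝ) (h0 : 0 ≤ t) (h1 : t ≤ 1) :
    t ^ 2 / 4 ≤ t - (1 - Real.exp (-t)) := by
  set F : ℝ → ℝ := fun s => s - (1 - Real.exp (-s)) - s ^ 2 / 4 with hFdef
  have hF : ∀ s : ℝ, HasDerivAt F (1 - Real.exp (-s) - s / 2) s := by
    intro s
    have hexp : HasDerivAt (fun s : ℝ => Real.exp (-s)) (-Real.exp (-s)) s := by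
      simpa using (hasDerivAt_neg s).exp
    have := ((hasDerivAt_id s).sub ((hasDerivAt_const s (1:ℝ)).sub hexp)).sub
      ((hasDerivAt_pow 2 s).div_const 4)
    refine this.congr_deriv ?_
    simp
    ring
  have mono : MonotoneOn F (Icc (0:ℝ) 1) := by
    apply monotoneOn_of_deriv_nonneg (convex_Icc 0 1)
    · exact fun s _ => (hF s).differentiableAt.continuousAt.continuousWithinAt
    · intro s _
      exact (hF s).differentiableAt.differentiableWithinAt
    · intro s hs
      rw [interior_Icc] at hs
      rw [(hF s).deriv]
      have h1s : (0:ℝ) < 1 + s := by linarith [hs.1]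
      have hle : Real.exp (-s) ≤ (1 + s)⁻¹ := by
        rw [Real.exp_neg]
        exact inv_anti₀ (by linarith [hs.1]) (by linarith [Real.add_one_le_exp s])
      have hc1 : (1 + s) * (1 + s)⁻¹ = 1 := mul_inv_cancel₀ (ne_of_gt h1s)
      nlinarith [hs.1, hs.2, inv_nonneg.mpr h1s.le]
  have h := mono (left_mem_Icc.mpr zero_le_one) (mem_Icc.mpr ⟨h0, h1⟩) h0
  have hF0 : F 0 = 0 := by simp [hFdef]
  rw [hF0] at h
  simp only [hFdef] at h
  linarith


theorem additive_profile_rho_gt_one_inadmissible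
    (ρ : ℝ) (hρ : 1 < ρ) (c : ℝ) (hc : 0 < c) :
    ¬ ∃ ν : Measure ℝ,
        -- ν a positive measure on (0,∞)
        ν (Set.Iic 0) = 0 ∧
        -- with total mass ∫ x ν(dx) = 1
        (∫⁻ x, ENNReal.ofReal x ∂ν) = 1 ∧
        -- whose desingularized Laplace transform φ(ξ) = ∫ (1−e^{−ξx}) ν(dx)
        -- satisfies the profile equation ξ = φ(ξ) + c φ(ξ)^{1+ρ} for all ξ > 0
        (∀ ξ : ℝ, 0 < ξ →
          ξ = (∫ x, (1 - Real.exp (-(ξ * x))) ∂ν) +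
            c * (∫ x, (1 - Real.exp (-(ξ * x))) ∂ν) ^ (1 + ρ)) := by
  rintro ⟨ν, h0, h1, heq⟩
  -- a.e. positivity
  have hae : ∀ᵐ x ∂ν, 0 < x := by
    rw [ae_iff]
    convert h0 using 2
    ext x
    simp [not_lt]
  -- integrability of the identity
  have hx_int : Integrable (fun x : ℝ => x) ν := by
    refine ⟨measurable_id.aestronglyMeasurable, ?_⟩
    have hcong : ∫⁻ x, ‖x‖ₑ ∂ν = ∫⁻ x, ENNReal.ofReal x ∂ν :=
      lintegral_congr_ae (hae.mono fun x hx => by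
        show ‖x‖ₑ = ENNReal.ofReal x
        exact Real.enorm_eq_ofReal hx.le)
    simpa [HasFiniteIntegral, hcong, h1] using ENNReal.one_lt_top
  have hx_integral : ∫ x, x ∂ν = 1 := by
    rw [integral_eq_lintegral_of_nonneg_ae (hae.mono fun x hx => hx.le)
      measurable_id.aestronglyMeasurable]
    simp [h1]
  -- integrability of the profile integrand
  have hφ_int : ∀ ξ : ℝ, 0 < ξ →
      Integrable (fun x : ℝ => 1 - Real.exp (-(ξ * x))) ν := by
    intro ξ hξ
    refine (hx_int.const_mul ξ).mono ?_ ?_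
    · exact ((continuous_const.sub
        (Real.continuous_exp.comp (continuous_const.mul continuous_id).neg)).aestronglyMeasurable)
    · refine hae.mono fun x hx => ?_
      have h1x : 0 ≤ ξ * x := by positivity
      have he1 : Real.exp (-(ξ * x)) ≤ 1 := by
        rw [← Real.exp_zero]; exact Real.exp_le_exp.mpr (by linarith)
      have he2 : 1 - ξ * x ≤ Real.exp (-(ξ * x)) := by
        linarith [Real.add_one_le_exp (-(ξ * x))]
      rw [Real.norm_eq_abs, Real.norm_eq_abs, abs_of_nonneg (by linarith),
        abs_of_nonneg h1x]
      linarith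
  -- there is a point a > 0 with ν (Ioi a) ≠ 0
  have hex : ∃ a : ℝ, 0 < a ∧ ν (Ioi a) ≠ 0 := by
    by_contra h
    push_neg at h
    have hIoi : ν (Ioi (0:ℝ)) = 0 := by
      have : Ioi (0:ℝ) = ⋃ n : ℕ, Ioi (((n:ℝ) + 1)⁻¹) := by
        ext x
        simp only [mem_Ioi, mem_iUnion]
        constructor
        · intro hx
          obtain ⟨n, hn⟩ := exists_nat_gt x⁻¹
          refine ⟨n, ?_⟩
          have hp : (0:ℝ) < (n:ℝ) + 1 := by positivity
          have h2 : 1 < ((n:ℝ) + 1) * x := by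
            calc 1 = x⁻¹ * x := (inv_mul_cancel₀ hx.ne').symm
              _ < ((n:ℝ) + 1) * x := by
                  exact mul_lt_mul_of_pos_right (by linarith) hx
          rw [inv_eq_one_div, div_lt_iff₀ hp]
          nlinarith
        · rintro ⟨n, hn⟩
          exact lt_trans (by positivity) hn
      rw [this]
      exact measure_iUnion_null fun n => h _ (by positivity)
    have huniv : ν univ = 0 := by
      rw [← Set.Iic_union_Ioi (a := (0:ℝ))]
      exact measure_union_null h0 hIoi
    have : ν = 0 := Measure.measure_univ_eq_zero.mp huniv
    rw [this] at h1
    simp at h1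
  obtain ⟨a, ha, hν0⟩ := hex
  -- the mass above a is finite
  have hνtop : ν (Ioi a) ≠ ⊤ := by
    intro htop
    have hle : ENNReal.ofReal a * ν (Ioi a) ≤ 1 := by
      calc ENNReal.ofReal a * ν (Ioi a)
          = ∫⁻ _ in Ioi a, ENNReal.ofReal a ∂ν := by
            rw [setLIntegral_const, mul_comm]
        _ ≤ ∫⁻ x in Ioi a, ENNReal.ofReal x ∂ν := by
            refine setLIntegral_mono measurable_id.ennreal_ofReal fun x hx =>
              ENNReal.ofReal_le_ofReal (le_of_lt hx)
        _ ≤ ∫⁻ x, ENNReal.ofReal x ∂ν := setLIntegral_le_lintegral _ _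
        _ = 1 := h1
    rw [htop, ENNReal.mul_top (by simpa using ha)] at hle
    exact (by simp : ¬ (⊤ : ℝ≥0∞) ≤ 1) hle
  set m : ℝ := (ν (Ioi a)).toReal with hm
  have hmpos : 0 < m := ENNReal.toReal_pos hν0 hνtop
  -- key inequality
  have key : ∀ ξ : ℝ, 0 < ξ → ξ * a ≤ 1 →
      m * ((ξ * a) ^ 2 / 4) ≤ c * ξ ^ (1 + ρ) := by
    intro ξ hξ hξa
    set φ : ℝ := ∫ x, (1 - Real.exp (-(ξ * x))) ∂ν with hφ
    have hφ_nonneg : 0 ≤ φ := by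
      refine integral_nonneg_of_ae (hae.mono fun x hx => ?_)
      show (0:ℝ) ≤ 1 - Real.exp (-(ξ * x))
      have : Real.exp (-(ξ * x)) ≤ 1 := by
        rw [← Real.exp_zero]; exact Real.exp_le_exp.mpr (by nlinarith)
      linarith
    have hφ_le : φ ≤ ξ := by
      calc φ ≤ ∫ x, ξ * x ∂ν := by
            refine integral_mono_ae (hφ_int ξ hξ) (hx_int.const_mul ξ)
              (hae.mono fun x hx => ?_)
            show 1 - Real.exp (-(ξ * x)) ≤ ξ * x
            linarith [Real.add_one_le_exp (-(ξ * x))]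
        _ = ξ := by rw [integral_const_mul, hx_integral, mul_one]
    -- ξ - φ as an integral
    have hsub : ξ - φ = ∫ x, (ξ * x - (1 - Real.exp (-(ξ * x)))) ∂ν := by
      rw [integral_sub (hx_int.const_mul ξ) (hφ_int ξ hξ), integral_const_mul,
        hx_integral, mul_one]
    -- lower bound via indicator
    have hlow : (ξ * a - (1 - Real.exp (-(ξ * a)))) * m ≤ ξ - φ := by
      rw [hsub]
      have hint_ind : Integrable
          ((Ioi a).indicator fun _ => ξ * a - (1 - Real.exp (-(ξ * a)))) ν := by
        rw [integrable_indicator_iff measurableSet_Ioi]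
        exact (integrableOn_const_iff).mpr (Or.inr (lt_top_iff_ne_top.mpr hνtop))
      have hint_sub : Integrable (fun x => ξ * x - (1 - Real.exp (-(ξ * x)))) ν :=
        (hx_int.const_mul ξ).sub (hφ_int ξ hξ)
      have hpt : ∀ᵐ x ∂ν,
          (Ioi a).indicator (fun _ => ξ * a - (1 - Real.exp (-(ξ * a)))) x
            ≤ ξ * x - (1 - Real.exp (-(ξ * x))) := by
        refine hae.mono fun x hx => ?_
        show (Ioi a).indicator (fun _ => ξ * a - (1 - Real.exp (-(ξ * a)))) x
            ≤ ξ * x - (1 - Real.exp (-(ξ * x)))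
        by_cases hxa : x ∈ Ioi a
        · rw [indicator_of_mem hxa]
          have hxa' : a < x := hxa
          have hsplit : Real.exp (-(ξ * x))
              = Real.exp (-(ξ * a)) * Real.exp (-(ξ * (x - a))) := by
            rw [← Real.exp_add]; ring_nf
          have hu1 : Real.exp (-(ξ * a)) ≤ 1 := by
            rw [← Real.exp_zero]; exact Real.exp_le_exp.mpr (by nlinarith)
          have hu0 : 0 < Real.exp (-(ξ * a)) := Real.exp_pos _
          have hv : 1 - ξ * (x - a) ≤ Real.exp (-(ξ * (x - a))) := by
            linarith [Real.add_one_le_exp (-(ξ * (x - a)))]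
          have hv1 : Real.exp (-(ξ * (x - a))) ≤ 1 := by
            rw [← Real.exp_zero]
            exact Real.exp_le_exp.mpr (by nlinarith)
          rw [hsplit]
          nlinarith
        · rw [indicator_of_notMem hxa]
          linarith [Real.add_one_le_exp (-(ξ * x))]
      calc (ξ * a - (1 - Real.exp (-(ξ * a)))) * m
          = ∫ x, (Ioi a).indicator (fun _ => ξ * a - (1 - Real.exp (-(ξ * a)))) x ∂ν := by
            rw [integral_indicator_const _ measurableSet_Ioi, smul_eq_mul, mul_comm]; rfl
        _ ≤ _ := integral_mono_ae hint_ind hint_sub hpt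
    -- quadratic bound
    have hq : (ξ * a) ^ 2 / 4 ≤ ξ * a - (1 - Real.exp (-(ξ * a))) :=
      quad_bound _ (by positivity) hξa
    have hstep : m * ((ξ * a) ^ 2 / 4) ≤ ξ - φ := by
      calc m * ((ξ * a) ^ 2 / 4) ≤ (ξ * a - (1 - Real.exp (-(ξ * a)))) * m := by
            rw [mul_comm]; exact mul_le_mul_of_nonneg_right hq hmpos.le
        _ ≤ ξ - φ := hlow
    have heqξ : ξ - φ = c * φ ^ (1 + ρ) := by
      have := heq ξ hξ
      rw [← hφ] at this
      linarith
    have hrpow : c * φ ^ (1 + ρ) ≤ c * ξ ^ (1 + ρ) :=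
      mul_le_mul_of_nonneg_left
        (Real.rpow_le_rpow hφ_nonneg hφ_le (by linarith)) hc.le
    linarith
  -- choose a small ξ to reach a contradiction
  set K : ℝ := m * a ^ 2 / 4 with hK
  have hKpos : 0 < K := by positivity
  set E : ℝ := (K / (2 * c)) ^ (ρ - 1)⁻¹ with hE
  have hEpos : 0 < E := Real.rpow_pos_of_pos (by positivity) _
  set ξ₀ : ℝ := min E (1 / a) with hξ₀
  have hξ₀pos : 0 < ξ₀ := lt_min hEpos (by positivity)
  have hξ₀a : ξ₀ * a ≤ 1 := by
    have : ξ₀ ≤ 1 / a := min_le_right _ _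
    calc ξ₀ * a ≤ (1 / a) * a := mul_le_mul_of_nonneg_right this ha.le
      _ = 1 := by field_simp
  have hkey := key ξ₀ hξ₀pos hξ₀a
  -- rewrite ξ₀ ^ (1+ρ) = ξ₀^2 * ξ₀^(ρ-1)
  have hsplit : ξ₀ ^ (1 + ρ) = ξ₀ ^ 2 * ξ₀ ^ (ρ - 1) := by
    rw [show (1 + ρ) = (2:ℝ) + (ρ - 1) by ring, Real.rpow_add hξ₀pos,
      Real.rpow_two]
  rw [hsplit] at hkey
  have hKle : K ≤ c * ξ₀ ^ (ρ - 1) := by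
    have h2 : m * ((ξ₀ * a) ^ 2 / 4) = K * ξ₀ ^ 2 := by rw [hK]; ring
    rw [h2] at hkey
    nlinarith [mul_pos hξ₀pos hξ₀pos, sq_nonneg ξ₀]
  have hEr : E ^ (ρ - 1) = K / (2 * c) := by
    rw [hE, ← Real.rpow_mul (by positivity : (0:ℝ) ≤ K / (2 * c)),
      inv_mul_cancel₀ (by linarith : ρ - 1 ≠ 0), Real.rpow_one]
  have hle2 : ξ₀ ^ (ρ - 1) ≤ K / (2 * c) := by
    rw [← hEr]
    exact Real.rpow_le_rpow hξ₀pos.le (min_le_left _ _) (by linarith)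
  have : c * ξ₀ ^ (ρ - 1) ≤ K / 2 := by
    calc c * ξ₀ ^ (ρ - 1) ≤ c * (K / (2 * c)) :=
          mul_le_mul_of_nonneg_left hle2 hc.le
      _ = K / 2 := by field_simp
  linarith
end
end
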